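/- arXiv:2404.16186 — 8 statements merged into one kernel-verified Lean document; each statement's English description precedes it below -/
import Mathlib

section
/- A path P_n on n vertices (n ≥ 6) has total domination subdivision number 3 if and only if n ≡ 2 (mod 4). -/
open SimpleGraph

variable {V : Type*}

/-- `S` is a total dominating set of `G`. -/
def IsTotalDomSet (G : SimpleGraph V) (S : Set V) : Prop :=
  ∀ v : V, ∃ u ∈ S, G.Adj v u

/-- The total domination number. -/
noncomputable def gammaT (G : SimpleGraph V) [Fintype V] : ℕ :=
  sInf {n | ∃ S : Finset V, S.card = n ∧ IsTotalDomSet G ↑S}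

/-- The graph obtained from `G` by subdividing each edge in `F` once. -/
def subdivide (G : SimpleGraph V) (F : Finset (Sym2 V)) :
    SimpleGraph (V ⊕ {e : Sym2 V // e ∈ F}) where
  Adj x y :=
    match x, y with
    | Sum.inl u, Sum.inl v => G.Adj u v ∧ s(u, v) ∉ F
    | Sum.inl u, Sum.inr e => u ∈ e.1
    | Sum.inr e, Sum.inl u => u ∈ e.1
    | Sum.inr _, Sum.inr _ => False
  symm := by
    constructor
    rintro (u | e) (v | f) h
    · exact ⟨h.1.symm, by rw [Sym2.eq_swap]; exact h.2⟩
    · exact h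
    · exact h
    · exact h
  loopless := by
    constructor
    rintro (u | e) h
    · exact G.irrefl h.1
    · exact h

/-- The total domination subdivision number. -/
noncomputable def sdGammaT (G : SimpleGraph V) [Fintype V] [DecidableEq V] : ℕ :=
  sInf {k | ∃ F : Finset (Sym2 V), ↑F ⊆ G.edgeSet ∧ F.card = k ∧
    gammaT G < gammaT (subdivide G F)}

def IsLeaf (G : SimpleGraph V) (v : V) : Prop := ∃! u, G.Adj v u

def IsSupport (G : SimpleGraph V) (v : V) : Prop := ∃ u, G.Adj v u ∧ IsLeaf G u

def IsWeakSupport (G : SimpleGraph V) (v : V) : Prop := ∃! u, G.Adj v u ∧ IsLeaf G u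

def IsStrongSupport (G : SimpleGraph V) (v : V) : Prop :=
  ∃ u w, u ≠ w ∧ G.Adj v u ∧ G.Adj v w ∧ IsLeaf G u ∧ IsLeaf G w

def Is2Packing (G : SimpleGraph V) (S : Set V) : Prop :=
  ∀ u ∈ S, ∀ v ∈ S, u ≠ v → 3 ≤ G.dist u v

noncomputable def packingNumber (G : SimpleGraph V) [Fintype V] : ℕ :=
  sSup {n | ∃ S : Finset V, S.card = n ∧ Is2Packing G ↑S}

def IsPendantEdge (G : SimpleGraph V) (e : Sym2 V) : Prop :=
  ∃ u v, e = s(u, v) ∧ G.Adj u v ∧ IsLeaf G u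

/-- Distance between two edges. -/
noncomputable def edgeDist (G : SimpleGraph V) (e f : Sym2 V) : ℕ :=
  sInf {n | ∃ u ∈ e, ∃ v ∈ f, G.dist u v = n}

/-- Distance from an edge to a set of edges. -/
noncomputable def edistToSet (G : SimpleGraph V) (e : Sym2 V) (F : Set (Sym2 V)) : ℕ :=
  sInf {n | ∃ f ∈ F, edgeDist G e f = n}

/-- Properties (a), (b), (c) of an edge set `F` in `T`. -/
def PropertyABC (T : SimpleGraph V) (F : Set (Sym2 V)) : Prop :=
  (∀ e, IsPendantEdge T e → e ∈ F) ∧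
  (∀ e ∈ F, edistToSet T e (F \ {e}) = 3) ∧
  (∀ e ∈ F, ∀ f ∈ F, e ≠ f →
    ∃! l : List (Sym2 V),
      l.head? = some e ∧ l.getLast? = some f ∧ (∀ x ∈ l, x ∈ F) ∧
      l.Chain' (fun a b => edgeDist T a b = 3))

namespace PathAux

def γfun (m : ℕ) : ℕ := m / 2 + if m % 4 = 0 then 0 else 1

lemma tds_map {V W : Type*} {G : SimpleGraph V} {H : SimpleGraph W} (e : G ≃g H)
    (S : Finset V) (hS : IsTotalDomSet G ↑S) :
    IsTotalDomSet H ↑(S.map e.toEquiv.toEmbedding) := by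
  intro w
  obtain ⟨u, hu, hadj⟩ := hS (e.symm w)
  refine ⟨e u, ?_, ?_⟩
  · simp only [Finset.coe_map, Set.mem_image, Finset.mem_coe]
    exact ⟨u, hu, rfl⟩
  · have h2 : H.Adj (e (e.symm w)) (e u) := e.map_rel_iff.mpr hadj
    simpa using h2

lemma gammaT_congr {V W : Type*} [Fintype V] [Fintype W] {G : SimpleGraph V}
    {H : SimpleGraph W} (e : G ≃g H) : gammaT G = gammaT H := by
  unfold gammaT
  congr 1
  ext j
  constructor
  · rintro ⟨S, hc, hS⟩
    exact ⟨S.map e.toEquiv.toEmbedding, by simp [hc], tds_map e S hS⟩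
  · rintro ⟨S, hc, hS⟩
    exact ⟨S.map e.symm.toEquiv.toEmbedding, by simp [hc], tds_map e.symm S hS⟩

/-! ### The path formula -/

def pat (m : ℕ) : Finset ℕ := (Finset.range m).filter (fun i => i % 4 = 1 ∨ i % 4 = 2)

lemma card_pat (m : ℕ) : (pat m).card = (m + 2) / 4 + (m + 1) / 4 := by
  induction m with
  | zero => rfl
  | succ m ih =>
    rw [pat, Finset.range_add_one, Finset.filter_insert]
    by_cases h : m % 4 = 1 ∨ m % 4 = 2
    · rw [if_pos h, Finset.card_insert_of_notMem (by simp [pat])]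
      rw [pat] at ih; omega
    · rw [if_neg h]
      rw [pat] at ih; omega

def Dnat (m : ℕ) : Finset ℕ :=
  (Finset.range m).filter
    (fun i => i % 4 = 1 ∨ i % 4 = 2 ∨ ((m % 4 = 1 ∨ m % 4 = 2) ∧ i = m - 2))

lemma card_Dnat (m : ℕ) (hm : 2 ≤ m) : (Dnat m).card = γfun m := by
  have hp := card_pat m
  by_cases h4 : m % 4 = 1 ∨ m % 4 = 2
  · have hset : Dnat m = insert (m - 2) (pat m) := by
      ext i
      simp only [Dnat, pat, Finset.mem_filter, Finset.mem_range, Finset.mem_insert]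
      constructor
      · rintro ⟨hi, h1 | h1 | h1⟩ <;> [right; right; left] <;> tauto
      · rintro (h1 | ⟨h1, h2⟩)
        · exact ⟨by omega, by tauto⟩
        · exact ⟨h1, by tauto⟩
    have hnm : m - 2 ∉ pat m := by
      simp only [pat, Finset.mem_filter, Finset.mem_range]
      omega
    rw [hset, Finset.card_insert_of_notMem hnm, hp, γfun]
    split <;> omega
  · have hset : Dnat m = pat m := by
      ext i
      simp only [Dnat, pat, Finset.mem_filter, Finset.mem_range]
      tauto
    rw [hset, hp, γfun]
    split <;> omega

lemma Dnat_tds (m : ℕ) (hm : 2 ≤ m) (v : ℕ) (hv : v < m) :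
    ∃ u, u ∈ Dnat m ∧ u < m ∧ (v + 1 = u ∨ u + 1 = v) := by
  simp only [Dnat, Finset.mem_filter, Finset.mem_range]
  by_cases h1 : v % 4 = 0 ∨ v % 4 = 1
  · by_cases h2 : v + 1 < m
    · exact ⟨v + 1, ⟨h2, by omega⟩, h2, by omega⟩
    · exact ⟨m - 2, ⟨by omega, by omega⟩, by omega, by omega⟩
  · exact ⟨v - 1, ⟨by omega, by omega⟩, by omega, by omega⟩

lemma exists_tds (m : ℕ) (hm : 2 ≤ m) :
    ∃ S : Finset (Fin m), S.card = γfun m ∧ IsTotalDomSet (pathGraph m) ↑S := by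
  have hsub : ∀ i ∈ Dnat m, i < m := by
    intro i hi
    exact Finset.mem_range.mp (Finset.mem_filter.mp hi).1
  refine ⟨(Dnat m).attachFin hsub, ?_, ?_⟩
  · rw [Finset.card_attachFin, card_Dnat m hm]
  · intro v
    obtain ⟨u, hu, hum, hadj⟩ := Dnat_tds m hm v.val v.isLt
    refine ⟨⟨u, hum⟩, ?_, ?_⟩
    · simpa [Finset.mem_coe, Finset.mem_attachFin] using hu
    · rw [pathGraph_adj]
      exact hadj

lemma tds_card_bound (m : ℕ) (S : Finset (Fin m))
    (hS : IsTotalDomSet (pathGraph m) ↑S) : m ≤ S.card + 2 * (S.card / 2) := by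
  classical
  set T : Finset ℕ := S.image Fin.val with hT
  have hTcard : T.card = S.card := Finset.card_image_of_injective _ Fin.val_injective
  have hTm : ∀ i ∈ T, i < m := by
    intro i hi
    obtain ⟨v, _, rfl⟩ := Finset.mem_image.mp hi
    exact v.isLt
  have hdom : ∀ v < m, ∃ u ∈ T, v + 1 = u ∨ u + 1 = v := by
    intro v hv
    obtain ⟨u, hu, hadj⟩ := hS ⟨v, hv⟩
    exact ⟨u.val, Finset.mem_image.mpr ⟨u, hu, rfl⟩, pathGraph_adj.mp hadj⟩
  set E : Finset ℕ := T.filter (fun i => i + 1 ∉ T) with hE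
  set B : Finset ℕ := T.filter (fun i => ¬(1 ≤ i ∧ i - 1 ∈ T)) with hB
  -- E and B are disjoint
  have hEB : ∀ i, i ∈ E → i ∈ B → False := by
    intro i hiE hiB
    rw [hE, Finset.mem_filter] at hiE
    rw [hB, Finset.mem_filter] at hiB
    obtain ⟨u, hu, h⟩ := hdom i (hTm i hiE.1)
    rcases h with h | h
    · exact hiE.2 (h ▸ hu)
    · exact hiB.2 ⟨by omega, by rw [show i - 1 = u from by omega]; exact hu⟩
  have hdisj : Disjoint E B := Finset.disjoint_left.mpr (fun {i} hi hib => hEB i hi hib)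
  -- every element of E is ≥ 1 with predecessor in T
  have hEpred : ∀ i ∈ E, 1 ≤ i ∧ i - 1 ∈ T := by
    intro i hi
    rw [hE, Finset.mem_filter] at hi
    obtain ⟨u, hu, h⟩ := hdom i (hTm i hi.1)
    rcases h with h | h
    · exact absurd (h ▸ hu) hi.2
    · exact ⟨by omega, by rw [show i - 1 = u from by omega]; exact hu⟩
  have hBsucc : ∀ i ∈ B, i + 1 ∈ T := by
    intro i hi
    rw [hB, Finset.mem_filter] at hi
    obtain ⟨u, hu, h⟩ := hdom i (hTm i hi.1)
    rcases h with h | h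
    · exact h ▸ hu
    · exact absurd ⟨by omega, by rw [show i - 1 = u from by omega]; exact hu⟩ hi.2
  -- 2 * |E| ≤ |T|
  have hE2 : 2 * E.card ≤ T.card := by
    have hEcard : (E.image (fun i => i - 1)).card = E.card := by
      apply Finset.card_image_of_injOn
      intro a ha b hb hab
      have h1 := (hEpred a ha).1
      have h2 := (hEpred b hb).1
      dsimp only at hab
      omega
    have hsubset : E ∪ E.image (fun i => i - 1) ⊆ T := by
      apply Finset.union_subset (Finset.filter_subset _ _)
      intro i hi
      obtain ⟨j, hj, rfl⟩ := Finset.mem_image.mp hi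
      exact (hEpred j hj).2
    have hdisj2 : Disjoint E (E.image (fun i => i - 1)) := by
      rw [Finset.disjoint_left]
      intro i hi hi'
      obtain ⟨j, hj, hji⟩ := Finset.mem_image.mp hi'
      have hj1 := (hEpred j hj).1
      have : j = i + 1 := by omega
      rw [hE, Finset.mem_filter] at hi hj
      exact hi.2 (this ▸ hj.1)
    calc 2 * E.card = (E ∪ E.image (fun i => i - 1)).card := by
          rw [Finset.card_union_of_disjoint hdisj2, hEcard]; ring
      _ ≤ T.card := Finset.card_le_card hsubset
  have hB2 : 2 * B.card ≤ T.card := by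
    have hBcard : (B.image (fun i => i + 1)).card = B.card := by
      apply Finset.card_image_of_injOn
      intro a _ b _ hab
      dsimp only at hab
      omega
    have hsubset : B ∪ B.image (fun i => i + 1) ⊆ T := by
      apply Finset.union_subset (Finset.filter_subset _ _)
      intro i hi
      obtain ⟨j, hj, rfl⟩ := Finset.mem_image.mp hi
      exact hBsucc j hj
    have hdisj2 : Disjoint B (B.image (fun i => i + 1)) := by
      rw [Finset.disjoint_left]
      intro i hi hi'
      obtain ⟨j, hj, hji⟩ := Finset.mem_image.mp hi'
      rw [hB, Finset.mem_filter] at hi hj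
      exact hi.2 ⟨by omega, by rw [show i - 1 = j from by omega]; exact hj.1⟩
    calc 2 * B.card = (B ∪ B.image (fun i => i + 1)).card := by
          rw [Finset.card_union_of_disjoint hdisj2, hBcard]; ring
      _ ≤ T.card := Finset.card_le_card hsubset
  -- m ≤ |T| + |E| + |B|
  have hmain : m ≤ T.card + E.card + B.card := by
    set Cc : Finset ℕ := (Finset.range m).filter (fun v => v ∉ T) with hCc
    have hsplit : T.card + Cc.card = m := by
      have h1 : (Finset.range m).filter (fun v => v ∈ T) = T := by
        ext i
        simp only [Finset.mem_filter, Finset.mem_range]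
        exact ⟨fun h => h.2, fun h => ⟨hTm i h, h⟩⟩
      calc T.card + Cc.card
          = ((Finset.range m).filter (fun v => v ∈ T)).card
            + ((Finset.range m).filter (fun v => v ∉ T)).card := by rw [h1]
        _ = (Finset.range m).card := Finset.card_filter_add_card_filter_not _
        _ = m := Finset.card_range m
    have hinj : Cc.card ≤ (E ∪ B).card := by
      apply Finset.card_le_card_of_injOn
        (fun v => if 1 ≤ v ∧ v - 1 ∈ T then v - 1 else v + 1)
      · intro v hv
        change v ∈ Cc at hv
        rw [hCc, Finset.mem_filter, Finset.mem_range] at hv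
        simp only [Finset.mem_coe]
        by_cases hc : 1 ≤ v ∧ v - 1 ∈ T
        · rw [if_pos hc]
          apply Finset.mem_union_left
          rw [hE, Finset.mem_filter]
          refine ⟨hc.2, ?_⟩
          have : v - 1 + 1 = v := by omega
          rw [this]; exact hv.2
        · rw [if_neg hc]
          apply Finset.mem_union_right
          obtain ⟨u, hu, h⟩ := hdom v hv.1
          rcases h with h | h
          · rw [hB, Finset.mem_filter]
            have : v + 1 - 1 = v := by omega
            refine ⟨h ▸ hu, ?_⟩
            rw [this]
            intro hcon
            exact hv.2 hcon.2
          · exact absurd ⟨by omega, by rw [show v - 1 = u from by omega]; exact hu⟩ hc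
      · intro a ha b hb hab
        rw [Finset.mem_coe] at ha hb
        dsimp only at hab
        rw [hCc, Finset.mem_filter, Finset.mem_range] at ha hb
        by_cases hca : 1 ≤ a ∧ a - 1 ∈ T <;> by_cases hcb : 1 ≤ b ∧ b - 1 ∈ T
        · rw [if_pos hca, if_pos hcb] at hab; omega
        · exfalso
          rw [if_pos hca, if_neg hcb] at hab
          -- a - 1 ∈ E and b + 1 ∈ B, and a - 1 = b + 1
          have h1 : a - 1 ∈ E := by
            rw [hE, Finset.mem_filter]
            refine ⟨hca.2, ?_⟩
            have : a - 1 + 1 = a := by omega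
            rw [this]; exact ha.2
          have h2 : b + 1 ∈ B := by
            obtain ⟨u, hu, h⟩ := hdom b hb.1
            rcases h with h | h
            · rw [hB, Finset.mem_filter]
              have : b + 1 - 1 = b := by omega
              refine ⟨h ▸ hu, ?_⟩
              rw [this]
              intro hcon
              exact hb.2 hcon.2
            · exact absurd ⟨by omega, by rw [show b - 1 = u from by omega]; exact hu⟩ hcb
          exact hEB (b + 1) (hab ▸ h1) h2
        · exfalso
          rw [if_neg hca, if_pos hcb] at hab
          have h1 : b - 1 ∈ E := by
            rw [hE, Finset.mem_filter]
            refine ⟨hcb.2, ?_⟩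
            have : b - 1 + 1 = b := by omega
            rw [this]; exact hb.2
          have h2 : a + 1 ∈ B := by
            obtain ⟨u, hu, h⟩ := hdom a ha.1
            rcases h with h | h
            · rw [hB, Finset.mem_filter]
              have : a + 1 - 1 = a := by omega
              refine ⟨h ▸ hu, ?_⟩
              rw [this]
              intro hcon
              exact ha.2 hcon.2
            · exact absurd ⟨by omega, by rw [show a - 1 = u from by omega]; exact hu⟩ hca
          exact hEB (a + 1) (hab ▸ h1) h2
        · rw [if_neg hca, if_neg hcb] at hab; omega
    have huncard : (E ∪ B).card = E.card + B.card := Finset.card_union_of_disjoint hdisj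
    omega
  omega

lemma gammaT_path (m : ℕ) (hm : 2 ≤ m) : gammaT (pathGraph m) = γfun m := by
  obtain ⟨S0, hc0, hS0⟩ := exists_tds m hm
  apply le_antisymm
  · exact Nat.sInf_le ⟨S0, hc0, hS0⟩
  · refine le_csInf ⟨γfun m, ⟨S0, hc0, hS0⟩⟩ ?_
    rintro j ⟨S, rfl, hS⟩
    have hb := tds_card_bound m S hS
    rw [γfun]
    split <;> omega

end PathAux


namespace PathAux2

def lo {n : ℕ} : Sym2 (Fin n) → ℕ :=
  Sym2.lift ⟨fun a b => min a.val b.val, fun a b => min_comm _ _⟩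

variable {n : ℕ} {F : Finset (Sym2 (Fin n))}

lemma lo_canon (hF : ↑F ⊆ (pathGraph n).edgeSet) {e : Sym2 (Fin n)} (he : e ∈ F) :
    lo e + 1 < n ∧
      ∀ (h1 : lo e < n) (h2 : lo e + 1 < n), e = s(⟨lo e, h1⟩, ⟨lo e + 1, h2⟩) := by
  have he' : e ∈ (pathGraph n).edgeSet := hF he
  induction e with
  | _ u v =>
    rw [mem_edgeSet, pathGraph_adj] at he'
    have hlo : lo s(u, v) = min u.val v.val := Sym2.lift_mk _ u v
    rcases he' with h | h
    · have h1 : lo s(u, v) = u.val := by rw [hlo]; omega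
      refine ⟨by omega, fun ha hb => ?_⟩
      rw [Sym2.eq_iff]
      left
      constructor <;> apply Fin.ext <;> simp [h1] <;> omega
    · have h1 : lo s(u, v) = v.val := by rw [hlo]; omega
      refine ⟨by omega, fun ha hb => ?_⟩
      rw [Sym2.eq_iff]
      right
      constructor <;> apply Fin.ext <;> simp [h1] <;> omega

lemma lo_inj (hF : ↑F ⊆ (pathGraph n).edgeSet) {e f : Sym2 (Fin n)}
    (he : e ∈ F) (hf : f ∈ F) (h : lo e = lo f) : e = f := by
  obtain ⟨h1, h2⟩ := lo_canon hF he
  obtain ⟨h3, h4⟩ := lo_canon hF hf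
  have he2 := h2 (by omega) h1
  have hf2 := h4 (by omega) h3
  have hx : (⟨lo e, by omega⟩ : Fin n) = (⟨lo f, by omega⟩ : Fin n) :=
    Fin.ext ((by omega : lo e = lo f))
  have hy : (⟨lo e + 1, h1⟩ : Fin n) = (⟨lo f + 1, h3⟩ : Fin n) :=
    Fin.ext ((by omega : lo e + 1 = lo f + 1))
  rw [he2, hx, hy, ← hf2]

lemma mem_lo (hF : ↑F ⊆ (pathGraph n).edgeSet) {e : Sym2 (Fin n)} (he : e ∈ F)
    (u : Fin n) : u ∈ e ↔ (u.val = lo e ∨ u.val = lo e + 1) := by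
  obtain ⟨h1, h2⟩ := lo_canon hF he
  constructor
  · intro hu
    rw [h2 (by omega) h1, Sym2.mem_iff] at hu
    rcases hu with rfl | rfl
    · left; rfl
    · right; rfl
  · rintro (h | h)
    · rw [h2 (by omega) h1, Sym2.mem_iff]; left; exact Fin.ext h
    · rw [h2 (by omega) h1, Sym2.mem_iff]; right; exact Fin.ext h

def cnt (F : Finset (Sym2 (Fin n))) (j : ℕ) : ℕ := (F.filter (fun e => lo e < j)).card

lemma cnt_mono {j j' : ℕ} (h : j ≤ j') : cnt F j ≤ cnt F j' := by
  apply Finset.card_le_card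
  intro e heF
  rw [Finset.mem_filter] at *
  exact ⟨heF.1, by omega⟩

lemma cnt_le (j : ℕ) : cnt F j ≤ F.card := Finset.card_le_card (Finset.filter_subset _ _)

lemma cnt_succ (j : ℕ) :
    cnt F (j + 1) = cnt F j + (F.filter (fun e => lo e = j)).card := by
  rw [cnt, cnt, ← Finset.card_union_of_disjoint, ← Finset.filter_or]
  · congr 1
    apply Finset.filter_congr
    intro e _
    omega
  · rw [Finset.disjoint_filter]
    intro e _ h1 h2
    omega

lemma cnt_succ_le (hF : ↑F ⊆ (pathGraph n).edgeSet) (j : ℕ) :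
    cnt F (j + 1) ≤ cnt F j + 1 := by
  rw [cnt_succ]
  have h1 : (F.filter (fun e => lo e = j)).card ≤ 1 := by
    rw [Finset.card_le_one]
    intro a ha b hb
    rw [Finset.mem_filter] at ha hb
    exact lo_inj hF ha.1 hb.1 (by rw [ha.2, hb.2])
  omega

lemma cnt_succ_mem (hF : ↑F ⊆ (pathGraph n).edgeSet) {e : Sym2 (Fin n)} (he : e ∈ F) :
    cnt F (lo e + 1) = cnt F (lo e) + 1 := by
  rw [cnt_succ]
  congr 1
  rw [Finset.card_eq_one]
  refine ⟨e, ?_⟩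
  ext f
  simp only [Finset.mem_filter, Finset.mem_singleton]
  constructor
  · rintro ⟨hf, hlo⟩
    exact lo_inj hF hf he hlo
  · rintro rfl
    exact ⟨he, rfl⟩

lemma cnt_succ_not (hF : ↑F ⊆ (pathGraph n).edgeSet) (j : ℕ)
    (h : ∀ e ∈ F, lo e ≠ j) : cnt F (j + 1) = cnt F j := by
  rw [cnt_succ]
  have : F.filter (fun e => lo e = j) = ∅ := by
    rw [Finset.filter_eq_empty_iff]
    exact h
  rw [this]
  simp

def psi (F : Finset (Sym2 (Fin n))) : Fin n ⊕ {e : Sym2 (Fin n) // e ∈ F} → ℕ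
  | Sum.inl v => v.val + cnt F v.val
  | Sum.inr e => lo e.1 + cnt F (lo e.1) + 1

lemma psi_mono_le {a b : ℕ} (h : a ≤ b) : a + cnt F a ≤ b + cnt F b := by
  have := cnt_mono (F := F) h
  omega

lemma psi_mono_lt {a b : ℕ} (h : a < b) : a + cnt F a < b + cnt F b := by
  have := cnt_mono (F := F) (le_of_lt h)
  omega

lemma adj_step (hF : ↑F ⊆ (pathGraph n).edgeSet) {a b : Fin n}
    (h : a.val + cnt F a.val + 1 = b.val + cnt F b.val) :
    b.val = a.val + 1 ∧ s(a, b) ∉ F := by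
  have hab : a.val < b.val := by
    by_contra hc
    have := psi_mono_le (F := F) (show b.val ≤ a.val by omega)
    omega
  have hb1 : b.val = a.val + 1 := by
    by_contra hc
    have h2 := psi_mono_le (F := F) (show a.val + 2 ≤ b.val by omega)
    have h3 := cnt_mono (F := F) (show a.val ≤ a.val + 2 by omega)
    omega
  refine ⟨hb1, fun hm => ?_⟩
  have hlo : lo s(a, b) = a.val := by
    rw [lo, Sym2.lift_mk]
    dsimp only
    omega
  have h4 := cnt_succ_mem hF hm
  rw [hlo] at h4
  rw [hb1] at h
  omega

lemma step_eq (hF : ↑F ⊆ (pathGraph n).edgeSet) {a b : Fin n} (hb1 : b.val = a.val + 1)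
    (hm : s(a, b) ∉ F) : a.val + cnt F a.val + 1 = b.val + cnt F b.val := by
  have hnone : ∀ e ∈ F, lo e ≠ a.val := by
    intro e heF hle
    obtain ⟨hh1, hh2⟩ := lo_canon hF heF
    have hcan : e = s(a, b) := by
      rw [hh2 (by omega) hh1, Sym2.eq_iff]
      left
      exact ⟨Fin.ext ((by omega : lo e = a.val)), Fin.ext ((by omega : lo e + 1 = b.val))⟩
    exact hm (hcan ▸ heF)
  have := cnt_succ_not hF a.val hnone
  rw [hb1]
  omega

lemma psi_lt (hF : ↑F ⊆ (pathGraph n).edgeSet) (x : Fin n ⊕ {e : Sym2 (Fin n) // e ∈ F}) :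
    psi F x < n + F.card := by
  match x with
  | Sum.inl v =>
    have h1 : v.val < n := v.isLt
    have h2 : cnt F v.val ≤ F.card := cnt_le _
    simp only [psi]
    omega
  | Sum.inr ⟨e, he⟩ =>
    have h1 : lo e + 1 < n := (lo_canon hF he).1
    have h2 : cnt F (lo e) < F.card := by
      apply Finset.card_lt_card
      rw [Finset.ssubset_iff_of_subset (Finset.filter_subset _ _)]
      refine ⟨e, he, ?_⟩
      simp only [Finset.mem_filter, not_and]
      intro
      omega
    simp only [psi]
    omega

lemma psi_inj (hF : ↑F ⊆ (pathGraph n).edgeSet) : Function.Injective (psi F) := by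
  rintro (u | ⟨e, he⟩) (v | ⟨f, hf⟩) h
  · simp only [psi] at h
    rcases lt_trichotomy u.val v.val with hlt | heq | hlt
    · exact absurd h (by have := psi_mono_lt (F := F) hlt; omega)
    · exact congrArg Sum.inl (Fin.ext heq)
    · exact absurd h (by have := psi_mono_lt (F := F) hlt; omega)
  · exfalso
    simp only [psi] at h
    rcases le_or_gt u.val (lo f) with hle | hlt
    · have := psi_mono_le (F := F) hle
      omega
    · have h2 : lo f + 1 ≤ u.val := hlt
      have h3 := psi_mono_le (F := F) h2
      have h4 := cnt_succ_mem hF hf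
      omega
  · exfalso
    simp only [psi] at h
    rcases le_or_gt v.val (lo e) with hle | hlt
    · have := psi_mono_le (F := F) hle
      omega
    · have h2 : lo e + 1 ≤ v.val := hlt
      have h3 := psi_mono_le (F := F) h2
      have h4 := cnt_succ_mem hF he
      omega
  · simp only [psi] at h
    rcases lt_trichotomy (lo e) (lo f) with hlt | heq | hlt
    · exfalso
      have h2 := psi_mono_le (F := F) (show lo e + 1 ≤ lo f from hlt)
      have h4 := cnt_succ_mem hF he
      omega
    · have : e = f := lo_inj hF he hf heq
      subst this
      rfl
    · exfalso
      have h2 := psi_mono_le (F := F) (show lo f + 1 ≤ lo e from hlt)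
      have h4 := cnt_succ_mem hF hf
      omega

noncomputable def subdivIso (hF : ↑F ⊆ (pathGraph n).edgeSet) :
    subdivide (pathGraph n) F ≃g pathGraph (n + F.card) where
  toEquiv := Equiv.ofBijective (fun x => (⟨psi F x, psi_lt hF x⟩ : Fin (n + F.card)))
    (by
      rw [Fintype.bijective_iff_injective_and_card]
      constructor
      · intro x y hxy
        exact psi_inj hF (congrArg Fin.val hxy)
      · simp [Fintype.card_sum, Fintype.card_coe])
  map_rel_iff' := by
    rintro (u | ⟨e, he⟩) (v | ⟨f, hf⟩)
    · show (pathGraph (n + F.card)).Adj _ _ ↔ (pathGraph n).Adj u v ∧ s(u, v) ∉ F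
      rw [pathGraph_adj, pathGraph_adj]
      simp only [Equiv.ofBijective_apply, psi]
      constructor
      · rintro (h | h)
        · obtain ⟨h1, h2⟩ := adj_step hF h
          exact ⟨Or.inl (by omega), h2⟩
        · obtain ⟨h1, h2⟩ := adj_step hF h
          refine ⟨Or.inr (by omega), ?_⟩
          rw [Sym2.eq_swap]
          exact h2
      · rintro ⟨hadj, hmem⟩
        rcases hadj with h | h
        · exact Or.inl (step_eq hF (by omega) hmem)
        · refine Or.inr (step_eq hF (by omega) ?_)
          rw [Sym2.eq_swap]
          exact hmem
    · show (pathGraph (n + F.card)).Adj _ _ ↔ u ∈ f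
      rw [pathGraph_adj]
      simp only [Equiv.ofBijective_apply, psi]
      have h4 := cnt_succ_mem hF hf
      rw [mem_lo hF hf]
      constructor
      · rintro (h | h)
        · left
          rcases lt_trichotomy u.val (lo f) with hlt | heq | hlt
          · have := psi_mono_lt (F := F) hlt
            omega
          · exact heq
          · have := psi_mono_le (F := F) (show lo f + 1 ≤ u.val from hlt)
            omega
        · right
          rcases lt_trichotomy u.val (lo f + 1) with hlt | heq | hlt
          · have := psi_mono_le (F := F) (show u.val ≤ lo f by omega)
            omega
          · exact heq
          · have h5 := psi_mono_le (F := F) (show lo f + 1 + 1 ≤ u.val by omega)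
            have h6 := cnt_mono (F := F) (show lo f + 1 ≤ lo f + 1 + 1 by omega)
            omega
      · rintro (h | h)
        · left
          rw [h]
        · right
          rw [h]
          omega
    · show (pathGraph (n + F.card)).Adj _ _ ↔ v ∈ e
      rw [pathGraph_adj]
      simp only [Equiv.ofBijective_apply, psi]
      have h4 := cnt_succ_mem hF he
      rw [mem_lo hF he]
      constructor
      · rintro (h | h)
        · right
          rcases lt_trichotomy v.val (lo e + 1) with hlt | heq | hlt
          · have := psi_mono_le (F := F) (show v.val ≤ lo e by omega)
            omega
          · exact heq
          · have h5 := psi_mono_le (F := F) (show lo e + 1 + 1 ≤ v.val by omega)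
            have h6 := cnt_mono (F := F) (show lo e + 1 ≤ lo e + 1 + 1 by omega)
            omega
        · left
          rcases lt_trichotomy v.val (lo e) with hlt | heq | hlt
          · have := psi_mono_lt (F := F) hlt
            omega
          · exact heq
          · have := psi_mono_le (F := F) (show lo e + 1 ≤ v.val from hlt)
            omega
      · rintro (h | h)
        · right
          rw [h]
        · left
          rw [h]
          omega
    · show (pathGraph (n + F.card)).Adj _ _ ↔ False
      rw [pathGraph_adj]
      simp only [Equiv.ofBijective_apply, psi, iff_false]
      rcases lt_trichotomy (lo e) (lo f) with hlt | heq | hlt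
      · have h2 := psi_mono_le (F := F) (show lo e + 1 ≤ lo f from hlt)
        have h4 := cnt_succ_mem hF he
        omega
      · have hef : e = f := lo_inj hF he hf heq
        subst hef
        omega
      · have h2 := psi_mono_le (F := F) (show lo f + 1 ≤ lo e from hlt)
        have h4 := cnt_succ_mem hF hf
        omega

end PathAux2


/-- A path `P_n` on `n ≥ 6` vertices has total domination subdivision
number `3` iff `n ≡ 2 (mod 4)`. -/
theorem path_class3_iff (n : ℕ) (hn : 6 ≤ n) :
    sdGammaT (SimpleGraph.pathGraph n) = 3 ↔ n % 4 = 2 := by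
  classical
  have hsubd : ∀ F : Finset (Sym2 (Fin n)), ↑F ⊆ (pathGraph n).edgeSet →
      gammaT (subdivide (pathGraph n) F) = PathAux.γfun (n + F.card) := by
    intro F hF
    rw [PathAux.gammaT_congr (PathAux2.subdivIso hF), PathAux.gammaT_path _ (by omega)]
  have hpath : gammaT (pathGraph n) = PathAux.γfun n := PathAux.gammaT_path n (by omega)
  have hedge : ∀ (i : ℕ) (hi : i < n) (h : i + 1 < n),
      s((⟨i, hi⟩ : Fin n), ⟨i + 1, h⟩) ∈ (pathGraph n).edgeSet := by
    intro i hi h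
    rw [SimpleGraph.mem_edgeSet, pathGraph_adj]
    left
    rfl
  have hlo : ∀ (i : ℕ) (hi : i < n) (h : i + 1 < n),
      PathAux2.lo s((⟨i, hi⟩ : Fin n), ⟨i + 1, h⟩) = i := by
    intro i hi h
    rw [PathAux2.lo, Sym2.lift_mk]
    exact (min_eq_left (by omega : i ≤ i + 1))
  have hE : ∀ i : ℕ, i + 1 < n → ∃ e : Sym2 (Fin n),
      e ∈ (pathGraph n).edgeSet ∧ PathAux2.lo e = i :=
    fun i h => ⟨s((⟨i, by omega⟩ : Fin n), ⟨i + 1, h⟩), hedge i (by omega) h, hlo i (by omega) h⟩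
  obtain ⟨e0, he0, hl0⟩ := hE 0 (by omega)
  obtain ⟨e1, he1, hl1⟩ := hE 1 (by omega)
  obtain ⟨e2, he2, hl2⟩ := hE 2 (by omega)
  have hne : ∀ (a b : Sym2 (Fin n)), PathAux2.lo a ≠ PathAux2.lo b → a ≠ b := by
    intro a b hab h
    exact hab (by rw [h])
  have h01 : e0 ≠ e1 := hne _ _ (by omega)
  have h02 : e0 ≠ e2 := hne _ _ (by omega)
  have h12 : e1 ≠ e2 := hne _ _ (by omega)
  -- the two candidate subdivision sets
  have hF2 : ∃ F : Finset (Sym2 (Fin n)), ↑F ⊆ (pathGraph n).edgeSet ∧ F.card = 2 := by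
    refine ⟨{e0, e1}, ?_, ?_⟩
    · intro e he
      simp only [Finset.coe_insert, Set.mem_insert_iff, Finset.coe_singleton,
        Set.mem_singleton_iff] at he
      rcases he with rfl | rfl
      · exact he0
      · exact he1
    · rw [Finset.card_insert_of_notMem (by simp [h01]), Finset.card_singleton]
  have hF3 : ∃ F : Finset (Sym2 (Fin n)), ↑F ⊆ (pathGraph n).edgeSet ∧ F.card = 3 := by
    refine ⟨{e0, e1, e2}, ?_, ?_⟩
    · intro e he
      simp only [Finset.coe_insert, Set.mem_insert_iff, Finset.coe_singleton,
        Set.mem_singleton_iff] at he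
      rcases he with rfl | rfl | rfl
      · exact he0
      · exact he1
      · exact he2
    · rw [Finset.card_insert_of_notMem (by simp [h01, h02]),
        Finset.card_insert_of_notMem (by simp [h12]), Finset.card_singleton]
  by_cases hc : n % 4 = 2
  · refine ⟨fun _ => hc, fun _ => ?_⟩
    obtain ⟨F3, hF3s, hF3c⟩ := hF3
    have mem3 : 3 ∈ {k | ∃ F : Finset (Sym2 (Fin n)), ↑F ⊆ (pathGraph n).edgeSet ∧
        F.card = k ∧ gammaT (pathGraph n) < gammaT (subdivide (pathGraph n) F)} := by
      refine ⟨F3, hF3s, hF3c, ?_⟩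
      rw [hpath, hsubd F3 hF3s, hF3c]
      unfold PathAux.γfun
      split_ifs <;> omega
    show sInf _ = 3
    apply le_antisymm (Nat.sInf_le mem3)
    refine le_csInf ⟨3, mem3⟩ ?_
    rintro j ⟨F, hFs, rfl, hlt⟩
    rw [hpath, hsubd F hFs] at hlt
    by_contra hj
    push_neg at hj
    unfold PathAux.γfun at hlt
    split_ifs at hlt <;> omega
  · refine ⟨fun h3 => ?_, fun h2 => absurd h2 hc⟩
    obtain ⟨F2, hF2s, hF2c⟩ := hF2
    have mem2 : 2 ∈ {k | ∃ F : Finset (Sym2 (Fin n)), ↑F ⊆ (pathGraph n).edgeSet ∧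
        F.card = k ∧ gammaT (pathGraph n) < gammaT (subdivide (pathGraph n) F)} := by
      refine ⟨F2, hF2s, hF2c, ?_⟩
      rw [hpath, hsubd F2 hF2s, hF2c]
      unfold PathAux.γfun
      split_ifs <;> omega
    have hle : sdGammaT (SimpleGraph.pathGraph n) ≤ 2 := Nat.sInf_le mem2
    omega
end

section
/- If T is a tree with total domination subdivision number 3, then every support vertex of T is a weak support vertex (has exactly one leaf neighbor). -/
open SimpleGraph

variable {V : Type*}

/-- Subdividing both pendant edges at a strong support vertex increases `γₜ`. -/
lemma strong_support_two {V : Type*} [Fintype V] [DecidableEq V]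
    (T : SimpleGraph V) (hconn : T.Connected) {v u w : V} (huw : u ≠ w)
    (hvu : T.Adj v u) (hvw : T.Adj v w) (hu : IsLeaf T u) (hw : IsLeaf T w) :
    gammaT T < gammaT (subdivide T ({s(u, v), s(w, v)} : Finset (Sym2 V))) := by
  classical
  set F : Finset (Sym2 V) := {s(u, v), s(w, v)} with hF
  set T' := subdivide T F with hT'
  have huvF : s(u, v) ∈ F := by simp [hF]
  have hwvF : s(w, v) ∈ F := by simp [hF]
  obtain ⟨u0, -, huU⟩ := hu
  obtain ⟨w0, -, hwU⟩ := hw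
  have huV : ∀ z, T.Adj u z → z = v := fun z hz =>
    (huU z hz).trans (huU v hvu.symm).symm
  have hwV : ∀ z, T.Adj w z → z = v := fun z hz =>
    (hwU z hz).trans (hwU v hvw.symm).symm
  -- the universe is a total dominating set of T'
  have hunivTDS : IsTotalDomSet T' (↑(Finset.univ : Finset (V ⊕ {e : Sym2 V // e ∈ F}))) := by
    rintro (z | ⟨e, he⟩)
    · by_cases hz : z = u
      · refine ⟨Sum.inr ⟨s(u, v), huvF⟩, by simp, ?_⟩
        show z ∈ s(u, v)
        rw [hz]
        exact Sym2.mem_mk_left u v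
      · obtain ⟨p⟩ := hconn.preconnected z u
        cases p with
        | nil => exact absurd rfl hz
        | cons h _ =>
          rename_i b _
          by_cases hf : s(z, b) ∈ F
          · exact ⟨Sum.inr ⟨s(z, b), hf⟩, by simp, Sym2.mem_mk_left z b⟩
          · exact ⟨Sum.inl b, by simp, ⟨h, hf⟩⟩
    · refine ⟨Sum.inl v, by simp, ?_⟩
      rcases Finset.mem_insert.mp he with h | h
      · show v ∈ e; rw [h]; exact Sym2.mem_mk_right u v
      · show v ∈ e; rw [Finset.mem_singleton.mp h]; exact Sym2.mem_mk_right w v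
  -- pick a minimum total dominating set of T'
  have hne : {n | ∃ S : Finset (V ⊕ {e : Sym2 V // e ∈ F}), S.card = n ∧
      IsTotalDomSet T' ↑S}.Nonempty := ⟨_, Finset.univ, rfl, hunivTDS⟩
  obtain ⟨S', hScard, hS'⟩ := Nat.sInf_mem hne
  -- the two subdivision vertices
  set x : V ⊕ {e : Sym2 V // e ∈ F} := Sum.inr ⟨s(u, v), huvF⟩ with hxdef
  set y : V ⊕ {e : Sym2 V // e ∈ F} := Sum.inr ⟨s(w, v), hwvF⟩ with hydef
  have hsuv_ne : s(u, v) ≠ s(w, v) := by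
    intro h
    rcases Sym2.eq_iff.mp h with ⟨h1, -⟩ | ⟨h1, -⟩
    · exact huw h1
    · exact hvu.ne' h1
  -- x ∈ S' (to dominate u) and y ∈ S' (to dominate w)
  have hxS : x ∈ S' := by
    obtain ⟨d, hd, hadj⟩ := hS' (Sum.inl u)
    rcases d with t | ⟨e, he⟩
    · obtain ⟨h1, h2⟩ := hadj
      rw [huV t h1] at h2
      exact absurd huvF h2
    · have he' : e = s(u, v) := by
        rcases Finset.mem_insert.mp he with h | h
        · exact h
        · exfalso
          have hm : u ∈ e := hadj
          rw [Finset.mem_singleton.mp h] at hm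
          rcases Sym2.mem_iff.mp hm with h1 | h1
          · exact huw h1
          · exact hvu.ne' h1
      subst he'
      exact hd
  have hyS : y ∈ S' := by
    obtain ⟨d, hd, hadj⟩ := hS' (Sum.inl w)
    rcases d with t | ⟨e, he⟩
    · obtain ⟨h1, h2⟩ := hadj
      rw [hwV t h1] at h2
      exact absurd hwvF h2
    · have he' : e = s(w, v) := by
        rcases Finset.mem_insert.mp he with h | h
        · exfalso
          have hm : w ∈ e := hadj
          rw [h] at hm
          rcases Sym2.mem_iff.mp hm with h1 | h1
          · exact huw h1.symm
          · exact hvw.ne' h1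
        · exact Finset.mem_singleton.mp h
      subst he'
      exact hd
  -- the V-part of S'
  set A : Finset V := Finset.univ.filter (fun z => Sum.inl z ∈ S') with hAdef
  have hAmem : ∀ z : V, z ∈ A ↔ Sum.inl z ∈ S' := by
    intro z; simp [hAdef]
  -- u ∈ A or v ∈ A (to dominate x)
  have hA_or : u ∈ A ∨ v ∈ A := by
    obtain ⟨d, hd, hadj⟩ := hS' x
    rcases d with t | e
    · have : t ∈ s(u, v) := hadj
      rcases Sym2.mem_iff.mp this with h1 | h1
      · exact Or.inl (by rw [hAmem, ← h1]; exact hd)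
      · exact Or.inr (by rw [hAmem, ← h1]; exact hd)
    · exact absurd hadj (by simp [hT', subdivide, hxdef])
  -- card bound : A.card + 2 ≤ S'.card
  have hxy : x ≠ y := by
    intro h
    rw [hxdef, hydef] at h
    exact hsuv_ne (Subtype.ext_iff.mp (Sum.inr_injective h))
  have hcard2 : A.card + 2 ≤ S'.card := by
    have hsub : insert x (insert y (A.image Sum.inl)) ⊆ S' := by
      intro a ha
      rcases Finset.mem_insert.mp ha with rfl | ha
      · exact hxS
      rcases Finset.mem_insert.mp ha with rfl | ha
      · exact hyS
      obtain ⟨t, ht, rfl⟩ := Finset.mem_image.mp ha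
      exact (hAmem t).mp ht
    have hximg : x ∉ insert y (A.image Sum.inl) := by
      intro h
      rcases Finset.mem_insert.mp h with h | h
      · exact hxy h
      · obtain ⟨t, -, ht⟩ := Finset.mem_image.mp h
        exact Sum.inl_ne_inr ht
    have hyimg : y ∉ A.image Sum.inl := by
      intro h
      obtain ⟨t, -, ht⟩ := Finset.mem_image.mp h
      exact Sum.inl_ne_inr ht
    have h1 := Finset.card_le_card hsub
    rw [Finset.card_insert_of_notMem hximg, Finset.card_insert_of_notMem hyimg,
      Finset.card_image_of_injective A Sum.inl_injective] at h1
    omega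
  -- the new total dominating set of T
  set S : Finset V := insert v (insert u (A \ {u, w})) with hSdef
  have hvS : v ∈ S := Finset.mem_insert_self v _
  have huS : u ∈ S := Finset.mem_insert_of_mem (Finset.mem_insert_self u _)
  have hsubS : A \ {u, w} ⊆ S := fun a ha =>
    Finset.mem_insert_of_mem (Finset.mem_insert_of_mem ha)
  have hSTDS : IsTotalDomSet T (↑S : Set V) := by
    intro z
    rcases eq_or_ne z u with rfl | hzu
    · exact ⟨v, hvS, hvu.symm⟩
    rcases eq_or_ne z w with rfl | hzw
    · exact ⟨v, hvS, hvw.symm⟩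
    rcases eq_or_ne z v with rfl | hzv
    · exact ⟨u, huS, hvu⟩
    obtain ⟨d, hd, hadj⟩ := hS' (Sum.inl z)
    rcases d with t | ⟨e, he⟩
    · obtain ⟨h1, -⟩ := hadj
      have htu : t ≠ u := by
        rintro rfl
        exact hzv (huV z h1.symm)
      have htw : t ≠ w := by
        rintro rfl
        exact hzv (hwV z h1.symm)
      refine ⟨t, hsubS ?_, h1⟩
      rw [Finset.mem_sdiff]
      exact ⟨(hAmem t).mpr hd, by simp [htu, htw]⟩
    · exfalso
      have hz : z ∈ e := hadj
      rcases Finset.mem_insert.mp he with h | h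
      · rw [h] at hz
        rcases Sym2.mem_iff.mp hz with h1 | h1
        · exact hzu h1
        · exact hzv h1
      · rw [Finset.mem_singleton.mp h] at hz
        rcases Sym2.mem_iff.mp hz with h1 | h1
        · exact hzw h1
        · exact hzv h1
  -- card of S
  have hScard2 : S.card ≤ A.card + 1 := by
    rcases hA_or with huA | hvA
    · have h1 : S.card ≤ (A \ {u, w}).card + 2 :=
        le_trans (Finset.card_insert_le _ _)
          (by have := Finset.card_insert_le u (A \ {u, w}); omega)
      have h2 : A \ {u, w} ⊆ A.erase u := by
        intro a ha
        rw [Finset.mem_sdiff] at ha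
        refine Finset.mem_erase.mpr ⟨?_, ha.1⟩
        intro h; apply ha.2; simp [h]
      have h3 := Finset.card_le_card h2
      have h4 := Finset.card_erase_of_mem huA
      have h5 : 1 ≤ A.card := Finset.card_pos.mpr ⟨u, huA⟩
      omega
    · have hvB : v ∈ insert u (A \ {u, w}) := by
        refine Finset.mem_insert_of_mem (Finset.mem_sdiff.mpr ⟨hvA, ?_⟩)
        simp [hvu.ne.symm, hvw.ne.symm]
        exact ⟨fun h => hvu.ne' h.symm, fun h => hvw.ne' h.symm⟩
      have h1 : S = insert u (A \ {u, w}) := Finset.insert_eq_self.mpr hvB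
      rw [h1]
      have h2 := Finset.card_insert_le u (A \ {u, w})
      have h3 := Finset.card_le_card (Finset.sdiff_subset (s := A) (t := {u, w}))
      omega
  -- conclude
  have hle : gammaT T ≤ S.card := Nat.sInf_le ⟨S, rfl, hSTDS⟩
  have : S.card < S'.card := by omega
  calc gammaT T ≤ S.card := hle
    _ < S'.card := this
    _ = gammaT T' := hScard

/-- If a tree has total domination subdivision number `3`, then every
support vertex is a weak support vertex. -/
theorem class3_support_weak {V : Type*} [Fintype V] [DecidableEq V]
    (T : SimpleGraph V) (hT : T.IsTree) (h3 : sdGammaT T = 3) :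
    ∀ v : V, IsSupport T v → IsWeakSupport T v := by
  intro v hv
  obtain ⟨u, hvu, hu⟩ := hv
  refine ⟨u, ⟨hvu, hu⟩, ?_⟩
  rintro u' ⟨hvu', hu'⟩
  by_contra hne
  have hlt := strong_support_two T hT.isConnected hne hvu' hvu hu' hu
  have hne2 : s(u', v) ≠ s(u, v) := by
    intro h
    rcases Sym2.eq_iff.mp h with ⟨h1, -⟩ | ⟨h1, -⟩
    · exact hne h1
    · exact hvu'.ne' h1
  have hmem : (2 : ℕ) ∈ {k | ∃ F : Finset (Sym2 V), ↑F ⊆ T.edgeSet ∧ F.card = k ∧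
      gammaT T < gammaT (subdivide T F)} := by
    refine ⟨{s(u', v), s(u, v)}, ?_, ?_, hlt⟩
    · intro e he
      rw [Finset.mem_coe, Finset.mem_insert] at he
      rcases he with rfl | he
      · exact hvu'.symm
      · rw [Finset.mem_singleton.mp he]
        exact hvu.symm
    · rw [Finset.card_insert_of_notMem (by simpa using hne2), Finset.card_singleton]
  have := Nat.sInf_le hmem
  rw [show sInf {k | ∃ F : Finset (Sym2 V), ↑F ⊆ T.edgeSet ∧ F.card = k ∧
      gammaT T < gammaT (subdivide T F)} = sdGammaT T from rfl, h3] at this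
  omega
end

section
/- Let T be a tree of order at least 6 in which the set S' of weak support vertices is a maximum 2-packing. Then T has no strong support vertex. -/
open SimpleGraph

variable {V : Type*}

/-- Leaf lower bound: if `u` is a leaf with unique neighbour `v`, then for `x ≠ u`,
`dist v x + 1 ≤ dist u x`. -/
lemma leaf_dist_lower {W : Type*} {G : SimpleGraph W} (hc : G.Connected)
    {u v x : W} (hu : ∀ y, G.Adj u y → y = v) (hx : x ≠ u) :
    G.dist v x + 1 ≤ G.dist u x := by
  obtain ⟨p, hp⟩ := (hc u x).exists_walk_length_eq_dist
  cases p with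
  | nil => exact absurd rfl hx.symm
  | cons h q =>
    obtain rfl := hu _ h
    have h1 : G.dist _ x ≤ q.length := SimpleGraph.dist_le q
    rw [SimpleGraph.Walk.length_cons] at hp
    omega

/-- If the set of weak support vertices of a tree of order at least `6`
is a maximum `2`-packing, then the tree has no strong support vertex. -/
theorem max_packing_no_strong_support {V : Type*} [Fintype V]
    (T : SimpleGraph V) (hT : T.IsTree) (h6 : 6 ≤ Fintype.card V)
    (hpack : Is2Packing T {v | IsWeakSupport T v})
    (hmax : ∀ S : Set V, Is2Packing T S → S.ncard ≤ {v | IsWeakSupport T v}.ncard) :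
    ¬ ∃ v : V, IsStrongSupport T v := by
  rintro ⟨v, u, w, huw, hvu, hvw, hlu, hlw⟩
  have hc : T.Connected := hT.isConnected
  set S' : Set V := {v | IsWeakSupport T v} with hS'
  have unique_nbr : ∀ {a b : V}, IsLeaf T a → T.Adj a b → ∀ y, T.Adj a y → y = b := by
    rintro a b ⟨z, hz, hzu⟩ hab y hay
    rw [hzu _ hay, hzu _ hab]
  have hvnl : ¬ IsLeaf T v := by
    rintro ⟨z, hz, hzu⟩
    exact huw ((hzu _ hvu).trans (hzu _ hvw).symm)
  have hvnw : ¬ IsWeakSupport T v := by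
    rintro ⟨z, hz, hzu⟩
    exact huw ((hzu _ ⟨hvu, hlu⟩).trans (hzu _ ⟨hvw, hlw⟩).symm)
  have hunw : ¬ IsWeakSupport T u := by
    rintro ⟨z, ⟨huz, hlz⟩, _⟩
    exact hvnl (unique_nbr hlu hvu.symm z huz ▸ hlz)
  by_cases hA : ∃ s, IsWeakSupport T s ∧ T.Adj v s
  · obtain ⟨s, hsweak, hvs⟩ := hA
    obtain ⟨l, ⟨hsl, hll⟩, -⟩ := id hsweak
    have hsv : s ≠ v := fun h => hvnw (h ▸ hsweak)
    have hlv : l ≠ v := fun h => hvnl (h ▸ hll)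
    have hsnl : ¬ IsLeaf T s := by
      rintro ⟨z, hz, hzu⟩
      exact hlv ((hzu _ hsl).trans (hzu _ hvs.symm).symm)
    have hlnw : ¬ IsWeakSupport T l := by
      rintro ⟨z, ⟨hlz, hlzl⟩, -⟩
      exact hsnl (unique_nbr hll hsl.symm z hlz ▸ hlzl)
    have hlu' : l ≠ u := by
      intro h
      exact hsv (unique_nbr hlu hvu.symm s (h ▸ hsl.symm))
    have hus : u ≠ s := fun h => hunw (h ▸ hsweak)
    have hdvs : T.dist v s = 1 := SimpleGraph.dist_eq_one_iff_adj.mpr hvs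
    have hdux : ∀ x, IsWeakSupport T x → x ≠ s → 3 ≤ T.dist u x := by
      intro x hx hxs
      have hxu : x ≠ u := fun h => hunw (h ▸ hx)
      have h3 : 3 ≤ T.dist s x := hpack s hsweak x hx (fun h => hxs h.symm)
      have htri : T.dist s x ≤ T.dist s v + T.dist v x := hc.dist_triangle
      have hdsv : T.dist s v = 1 := SimpleGraph.dist_comm ▸ hdvs
      have := leaf_dist_lower hc (unique_nbr hlu hvu.symm) hxu
      omega
    have hdlx : ∀ x, IsWeakSupport T x → x ≠ s → 3 ≤ T.dist l x := by
      intro x hx hxs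
      have hxl : x ≠ l := fun h => hlnw (h ▸ hx)
      have h3 : 3 ≤ T.dist s x := hpack s hsweak x hx (fun h => hxs h.symm)
      have := leaf_dist_lower hc (unique_nbr hll hsl.symm) hxl
      omega
    have hdlu : 3 ≤ T.dist l u := by
      have h1 : T.dist v s + 1 ≤ T.dist u s :=
        leaf_dist_lower hc (unique_nbr hlu hvu.symm) hus.symm
      have h2 : T.dist s u + 1 ≤ T.dist l u :=
        leaf_dist_lower hc (unique_nbr hll hsl.symm) hlu'.symm
      have : T.dist s u = T.dist u s := SimpleGraph.dist_comm
      omega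
    set S : Set V := insert l (insert u (S' \ {s})) with hS
    have hpackS : Is2Packing T S := by
      rintro a ha b hb hab
      simp only [hS, Set.mem_insert_iff, Set.mem_diff, Set.mem_singleton_iff] at ha hb
      rcases ha with rfl | rfl | ⟨ha, has⟩ <;> rcases hb with rfl | rfl | ⟨hb, hbs⟩
      · exact absurd rfl hab
      · exact hdlu
      · exact hdlx b hb hbs
      · exact SimpleGraph.dist_comm ▸ hdlu
      · exact absurd rfl hab
      · exact hdux b hb hbs
      · exact SimpleGraph.dist_comm ▸ hdlx a ha has
      · exact SimpleGraph.dist_comm ▸ hdux a ha has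
      · exact hpack a ha b hb hab
    have hcard : S.ncard = S'.ncard + 1 := by
      have hfin : (S' \ {s}).Finite := Set.toFinite _
      have hu1 : u ∉ S' \ {s} := fun h => hunw h.1
      have hl1 : l ∉ insert u (S' \ {s}) := by
        rintro (h | h)
        · exact hlu' h
        · exact hlnw h.1
      have hd : (S' \ {s}).ncard + 1 = S'.ncard :=
        Set.ncard_diff_singleton_add_one (show s ∈ S' from hsweak) (Set.toFinite S')
      rw [hS, Set.ncard_insert_of_notMem hl1 (hfin.insert u),
          Set.ncard_insert_of_notMem hu1 hfin]
      omega
    have := hmax S hpackS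
    omega
  · set S : Set V := insert u S' with hS
    have hdux : ∀ x, IsWeakSupport T x → 3 ≤ T.dist u x := by
      intro x hx
      have hxu : x ≠ u := fun h => hunw (h ▸ hx)
      have hxv : x ≠ v := fun h => hvnw (h ▸ hx)
      have h1 : 1 ≤ T.dist v x := hc.pos_dist_of_ne (Ne.symm hxv)
      have h2 : T.dist v x ≠ 1 := by
        intro h
        exact hA ⟨x, hx, SimpleGraph.dist_eq_one_iff_adj.mp h⟩
      have := leaf_dist_lower hc (unique_nbr hlu hvu.symm) hxu
      omega
    have hpackS : Is2Packing T S := by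
      rintro a ha b hb hab
      simp only [hS, Set.mem_insert_iff] at ha hb
      rcases ha with rfl | ha <;> rcases hb with rfl | hb
      · exact absurd rfl hab
      · exact hdux b hb
      · exact SimpleGraph.dist_comm ▸ hdux a ha
      · exact hpack a ha b hb hab
    have hcard : S.ncard = S'.ncard + 1 := by
      have hu1 : u ∉ S' := fun h => hunw h
      rw [hS, Set.ncard_insert_of_notMem hu1 (Set.toFinite _)]
    have := hmax S hpackS
    omega
end

section
/- Let T be a tree of order at least 6 in which the set S' of weak support vertices is a maximum 2-packing. Then for every x ∈ S', the minimum distance in T from x to S' \ {x} is exactly 3. -/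
open SimpleGraph

variable {V : Type*}

section Helpers

variable {V : Type*}

private lemma aux_reach_pair (G : SimpleGraph V) {x u : V}
    (hx : ∀ w, G.Adj x w → w = u) (hu : ∀ w, G.Adj u w → w = x) :
    ∀ {v : V}, G.Walk v x → v = x ∨ v = u := by
  intro v p
  induction p with
  | nil => exact Or.inl rfl
  | cons h q ih =>
    rcases ih hx hu with rfl | rfl
    · exact Or.inr (hx _ h.symm)
    · exact Or.inl (hu _ h.symm)

private lemma aux_card_le_two (G : SimpleGraph V) [Fintype V] (hc : G.Connected) {x u : V}
    (hx : ∀ w, G.Adj x w → w = u) (hu : ∀ w, G.Adj u w → w = x) :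
    Fintype.card V ≤ 2 := by
  classical
  have hall : ∀ v : V, v = x ∨ v = u := fun v =>
    aux_reach_pair G hx hu ((hc.preconnected v x).some)
  have hsub : (Finset.univ : Finset V) ⊆ {x, u} := by
    intro v _
    rcases hall v with rfl | rfl <;> simp
  calc Fintype.card V = (Finset.univ : Finset V).card := rfl
    _ ≤ ({x, u} : Finset V).card := Finset.card_le_card hsub
    _ ≤ 2 := Finset.card_le_two

private lemma aux_no_triangle {G : SimpleGraph V} (hA : G.IsAcyclic) {a b c : V}
    (hab : G.Adj a b) (hbc : G.Adj b c) (hac : G.Adj a c) : False := by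
  have h1 : (SimpleGraph.Walk.cons hac SimpleGraph.Walk.nil).IsPath := by
    simp [hac.ne]
  have h2 : (SimpleGraph.Walk.cons hab (SimpleGraph.Walk.cons hbc SimpleGraph.Walk.nil)).IsPath := by
    simp [hab.ne, hac.ne, hbc.ne]
  have h3 := hA.path_unique ⟨_, h1⟩ ⟨_, h2⟩
  have h4 : (1 : ℕ) = 2 := by
    simpa using congrArg (fun p : G.Path a c => p.1.length) h3
  omega

/-- If `l` has unique neighbor `y`, then for `z ≠ l` we have `dist z l = dist z y + 1`. -/
private lemma aux_leaf_dist {G : SimpleGraph V} (hc : G.Connected) {l y : V}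
    (hadj : G.Adj l y) (huniq : ∀ w, G.Adj l w → w = y) {z : V} (hz : z ≠ l) :
    G.dist z l = G.dist z y + 1 := by
  have h1 : G.dist y l = 1 := SimpleGraph.dist_eq_one_iff_adj.mpr hadj.symm
  have hub : G.dist z l ≤ G.dist z y + 1 := by
    have := hc.dist_triangle (u := z) (v := y) (w := l)
    omega
  obtain ⟨p, hp⟩ := hc.exists_walk_length_eq_dist z l
  have hpos : 0 < G.dist z l := hc.pos_dist_of_ne hz
  have hnn : ¬ p.reverse.Nil := by
    rw [SimpleGraph.Walk.not_nil_iff_lt_length]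
    simpa [hp] using hpos
  obtain ⟨w, hadj', q, hq⟩ := SimpleGraph.Walk.not_nil_iff.mp hnn
  have hw : w = y := huniq w hadj'
  have hlen : q.length + 1 = G.dist z l := by
    have := congrArg SimpleGraph.Walk.length hq
    simpa [hp] using this.symm
  have h5 : G.dist w z ≤ q.length := SimpleGraph.dist_le q
  have h6 : G.dist z y ≤ q.length := by
    rw [← hw, SimpleGraph.dist_comm]
    exact h5
  omega

private lemma aux_exists_dist_two {G : SimpleGraph V} (hc : G.Connected) {x v : V}
    (h2 : 2 ≤ G.dist x v) : ∃ b, G.dist x b = 2 := by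
  obtain ⟨p, hp⟩ := hc.exists_walk_length_eq_dist x v
  cases p with
  | nil => simp at hp; rw [SimpleGraph.dist_self] at h2; omega
  | cons h1 p1 =>
    cases p1 with
    | nil => simp at hp; omega
    | @cons a b' c h2' p2 =>
      refine ⟨b', ?_⟩
      have hlen : p2.length + 2 = G.dist x v := by
        simpa using hp
      have hub : G.dist x b' ≤ 2 := by
        simpa using SimpleGraph.dist_le (SimpleGraph.Walk.cons h1 (SimpleGraph.Walk.cons h2' SimpleGraph.Walk.nil))
      have hbv : G.dist b' v ≤ p2.length := SimpleGraph.dist_le p2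
      have hlb : G.dist x v ≤ G.dist x b' + G.dist b' v := hc.dist_triangle
      omega

end Helpers

/-- If the set `S'` of weak support vertices of a tree of order at least `6`
is a maximum `2`-packing, then every `x ∈ S'` is at distance exactly `3` from `S' \ {x}`. -/
theorem max_packing_dist_three {V : Type*} [Fintype V]
    (T : SimpleGraph V) (hT : T.IsTree) (h6 : 6 ≤ Fintype.card V)
    (hpack : Is2Packing T {v | IsWeakSupport T v})
    (hmax : ∀ S : Set V, Is2Packing T S → S.ncard ≤ {v | IsWeakSupport T v}.ncard) :
    ∀ x : V, IsWeakSupport T x →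
      sInf {n | ∃ y : V, IsWeakSupport T y ∧ y ≠ x ∧ T.dist x y = n} = 3 := by
  classical
  intro x hx
  have hconn : T.Connected := hT.isConnected
  have hacy : T.IsAcyclic := hT.IsAcyclic
  -- choose the leaf neighbor of each weak support vertex
  have hch : ∀ y : V, ∃ z : V, IsWeakSupport T y → T.Adj y z ∧ IsLeaf T z := by
    intro y
    by_cases hy : IsWeakSupport T y
    · obtain ⟨z, hz, -⟩ := hy
      exact ⟨z, fun _ => hz⟩
    · exact ⟨y, fun h => absurd h hy⟩
  choose l hl using hch
  have hladj : ∀ y, IsWeakSupport T y → T.Adj y (l y) := fun y hy => (hl y hy).1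
  have hlleaf : ∀ y, IsWeakSupport T y → IsLeaf T (l y) := fun y hy => (hl y hy).2
  -- the unique neighbor of the chosen leaf is `y`
  have hluniq : ∀ y, IsWeakSupport T y → ∀ w, T.Adj (l y) w → w = y := by
    intro y hy w hw
    exact ((hlleaf y hy).unique hw (hladj y hy).symm)
  -- weak support vertices are not leaves
  have hnl : ∀ y, IsWeakSupport T y → ¬ IsLeaf T y := by
    intro y hy hyl
    obtain ⟨z, ⟨hz1, hz2⟩, -⟩ := hy
    have hyuniq : ∀ w, T.Adj y w → w = z := fun w hw => hyl.unique hw hz1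
    have hzuniq : ∀ w, T.Adj z w → w = y := fun w hw => hz2.unique hw hz1.symm
    have := aux_card_le_two T hconn hyuniq hzuniq
    omega
  -- distance formula through the chosen leaves
  have hdl : ∀ y, IsWeakSupport T y → ∀ z, z ≠ l y → T.dist z (l y) = T.dist z y + 1 := by
    intro y hy z hz
    exact aux_leaf_dist hconn (hladj y hy).symm (hluniq y hy) hz
  -- the chosen leaves are injective
  have hinj : ∀ y y', IsWeakSupport T y → IsWeakSupport T y' → l y = l y' → y = y' := by
    intro y y' hy hy' hll
    have : T.Adj (l y') y := hll ▸ (hladj y hy).symm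
    exact hluniq y' hy' y this
  -- main claim: there is a weak support vertex at distance exactly 3 from x
  have key : ∃ y : V, IsWeakSupport T y ∧ y ≠ x ∧ T.dist x y = 3 := by
    by_contra hno
    push_neg at hno
    have hfar : ∀ y, IsWeakSupport T y → y ≠ x → 4 ≤ T.dist x y := by
      intro y hy hyx
      have h3 : 3 ≤ T.dist x y := hpack x hx y hy (Ne.symm hyx)
      have := hno y hy hyx
      omega
    -- there exists a vertex at distance ≥ 2 from x
    have hv2 : ∃ v, 2 ≤ T.dist x v := by
      by_contra hnov
      push_neg at hnov
      -- all vertices are within distance 1 of x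
      have hadj1 : ∀ v : V, v ≠ x → T.Adj x v := by
        intro v hvx
        have h1 : T.dist x v < 2 := hnov v
        have h0 : 0 < T.dist x v := hconn.pos_dist_of_ne (Ne.symm hvx)
        have : T.dist x v = 1 := by omega
        exact SimpleGraph.dist_eq_one_iff_adj.mp this
      have hleaf1 : ∀ v : V, v ≠ x → IsLeaf T v := by
        intro v hvx
        refine ⟨x, (hadj1 v hvx).symm, ?_⟩
        intro w hw
        by_contra hwx
        have hxw : T.Adj x w := hadj1 w (fun h => hwx (h ▸ rfl))
        exact aux_no_triangle hacy (hadj1 v hvx) hw hxw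
      -- get two distinct vertices different from x
      have hcard : 1 < (Finset.univ.erase x).card := by
        rw [Finset.card_erase_of_mem (Finset.mem_univ x)]
        have : (Finset.univ : Finset V).card = Fintype.card V := rfl
        omega
      obtain ⟨a, ha, b, hb, hab⟩ := Finset.one_lt_card.mp hcard
      have hax : a ≠ x := Finset.ne_of_mem_erase ha
      have hbx : b ≠ x := Finset.ne_of_mem_erase hb
      obtain ⟨z, hz, hzuniq⟩ := hx
      have h1 : a = z := hzuniq a ⟨hadj1 a hax, hleaf1 a hax⟩
      have h2 : b = z := hzuniq b ⟨hadj1 b hbx, hleaf1 b hbx⟩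
      exact hab (h1.trans h2.symm)
    obtain ⟨v, hv⟩ := hv2
    obtain ⟨b, hb⟩ := aux_exists_dist_two hconn hv
    -- b is never one of the chosen leaves
    have hbl : ∀ y, IsWeakSupport T y → b ≠ l y := by
      intro y hy hbly
      by_cases hyx : y = x
      · have hadjxb : T.Adj x b := by
          rw [hbly]
          exact hyx ▸ hladj y hy
        have : T.dist x b = 1 := SimpleGraph.dist_eq_one_iff_adj.mpr hadjxb
        omega
      · have hxl : x ≠ l y := by
          intro h
          exact hnl x hx (h ▸ hlleaf y hy)
        have : T.dist x (l y) = T.dist x y + 1 := hdl y hy x hxl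
        have h4 := hfar y hy hyx
        rw [← hbly] at this
        omega
    -- distance from b to far weak supports is at least 2
    have hby2 : ∀ y, IsWeakSupport T y → 2 ≤ T.dist b y := by
      intro y hy
      by_cases hyx : y = x
      · subst hyx; rw [SimpleGraph.dist_comm]; omega
      · have h4 := hfar y hy hyx
        have htri : T.dist x y ≤ T.dist x b + T.dist b y := hconn.dist_triangle
        omega
    -- the replacement function
    set f : V → V := fun y => if T.dist b y ≤ 2 then l y else y with hf
    have hfval : ∀ y, IsWeakSupport T y → (f y = l y ∧ T.dist b y ≤ 2) ∨ (f y = y ∧ 3 ≤ T.dist b y) := by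
      intro y hy
      by_cases h : T.dist b y ≤ 2
      · left; exact ⟨if_pos h, h⟩
      · right; exact ⟨if_neg h, by omega⟩
    -- key distance estimate from b
    have key1 : ∀ y, IsWeakSupport T y → 3 ≤ T.dist b (f y) := by
      intro y hy
      rcases hfval y hy with ⟨hfy, hc2⟩ | ⟨hfy, hc3⟩
      · rw [hfy, hdl y hy b (hbl y hy)]
        have := hby2 y hy
        omega
      · rw [hfy]; exact hc3
    -- distances between images
    have key2 : ∀ y y', IsWeakSupport T y → IsWeakSupport T y' → y ≠ y' → 3 ≤ T.dist (f y) (f y') := by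
      intro y y' hy hy' hyy'
      have hp3 : 3 ≤ T.dist y y' := hpack y hy y' hy' hyy'
      have hyly' : y ≠ l y' := fun h => hnl y hy (h ▸ hlleaf y' hy')
      have hy'ly : y' ≠ l y := fun h => hnl y' hy' (h ▸ hlleaf y hy)
      have hll : l y ≠ l y' := fun h => hyy' (hinj y y' hy hy' h)
      rcases hfval y hy with ⟨hfy, -⟩ | ⟨hfy, -⟩ <;>
        rcases hfval y' hy' with ⟨hfy', -⟩ | ⟨hfy', -⟩ <;> rw [hfy, hfy']
      · -- both leaves
        rw [hdl y' hy' (l y) hll, SimpleGraph.dist_comm, hdl y hy y' hy'ly]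
        rw [SimpleGraph.dist_comm]
        omega
      · -- l y vs y'
        rw [SimpleGraph.dist_comm, hdl y hy y' hy'ly, SimpleGraph.dist_comm]
        omega
      · -- y vs l y'
        rw [hdl y' hy' y hyly']
        omega
      · exact hp3
    -- injectivity of f on weak supports
    have hfinj : Set.InjOn f {v | IsWeakSupport T v} := by
      intro y hy y' hy' hff
      by_contra hne
      have := key2 y y' hy hy' hne
      rw [hff, SimpleGraph.dist_self] at this
      omega
    -- b is not in the image
    have hbim : b ∉ f '' {v | IsWeakSupport T v} := by
      rintro ⟨y, hy, hfy⟩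
      have := key1 y hy
      rw [hfy, SimpleGraph.dist_self] at this
      omega
    -- the new set is a 2-packing
    have hpack' : Is2Packing T (insert b (f '' {v | IsWeakSupport T v})) := by
      rintro p hp q hq hpq
      rcases hp with rfl | ⟨y, hy, rfl⟩ <;> rcases hq with rfl | ⟨y', hy', rfl⟩
      · exact absurd rfl hpq
      · exact key1 y' hy'
      · rw [SimpleGraph.dist_comm]; exact key1 y hy
      · refine key2 y y' hy hy' ?_
        intro h
        exact hpq (h ▸ rfl)
    -- cardinality contradiction
    have hcard1 : (insert b (f '' {v | IsWeakSupport T v})).ncard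
        = (f '' {v | IsWeakSupport T v}).ncard + 1 :=
      Set.ncard_insert_of_notMem hbim (Set.toFinite _)
    have hcard2 : (f '' {v | IsWeakSupport T v}).ncard = {v | IsWeakSupport T v}.ncard :=
      Set.ncard_image_of_injOn hfinj
    have := hmax _ hpack'
    rw [hcard1, hcard2] at this
    omega
  obtain ⟨y, hy, hyx, hd3⟩ := key
  refine le_antisymm (Nat.sInf_le ⟨y, hy, hyx, hd3⟩) (le_csInf ⟨3, y, hy, hyx, hd3⟩ ?_)
  rintro n ⟨z, hz, hzx, rfl⟩
  exact hpack x hx z hz (Ne.symm hzx)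
end

section
/- Let G be a connected graph of order at least 2, and let P = {P(v) : v ∈ V(G)} be a family where P(v) is a partition of N_G(v) for each v. Then in the 2-subdivision G(P), the vertex set V(G) is a maximum 2-packing of G(P), and ρ(G(P)) = |V(G)|. -/
open SimpleGraph

variable {V : Type*}

/-- `Pf` is a partition of the finset `S`. -/
def IsFinsetPartitionOf {V : Type*} (Pf : Finset (Finset V)) (S : Finset V) : Prop :=
  (∀ A ∈ Pf, A.Nonempty) ∧ (∀ x, x ∈ S ↔ ∃ A ∈ Pf, x ∈ A) ∧
    ∀ A ∈ Pf, ∀ B ∈ Pf, A ≠ B → Disjoint A B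

/-- The vertex type of the 2-subdivision `G(Pf)`: the original vertices, the pendant
leaves `(v,1)`, and the vertices `(v,A)` for `A ∈ Pf(v)`. -/
abbrev TwoSubVert (V : Type*) (P : V → Finset (Finset V)) : Type _ :=
  V ⊕ (V ⊕ Σ v : V, {A : Finset V // A ∈ P v})

/-- The 2-subdivision `G(Pf)` of `G` with respect to the family of partitions `Pf`. -/
def twoSubdivision {V : Type*} (G : SimpleGraph V) (P : V → Finset (Finset V)) :
    SimpleGraph (TwoSubVert V P) where
  Adj x y :=
    match x, y with
    | Sum.inl u, Sum.inr (Sum.inl v) => u = v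
    | Sum.inr (Sum.inl u), Sum.inl v => u = v
    | Sum.inl u, Sum.inr (Sum.inr p) => u = p.1
    | Sum.inr (Sum.inr p), Sum.inl u => u = p.1
    | Sum.inr (Sum.inr p), Sum.inr (Sum.inr q) =>
        G.Adj p.1 q.1 ∧ q.1 ∈ p.2.1 ∧ p.1 ∈ q.2.1
    | _, _ => False
  symm := by
    constructor
    rintro (u | u | p) (v | v | q) h
    all_goals first
      | exact h
      | exact h.symm
      | exact ⟨h.1.symm, h.2.2, h.2.1⟩
  loopless := by
    constructor
    rintro (u | u | p) h
    · exact h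
    · exact h
    · exact G.irrefl h.1


section TwoSubAux

variable {V : Type*} {G : SimpleGraph V} {P : V → Finset (Finset V)}
variable [Fintype V] [DecidableEq V] [DecidableRel G.Adj]

def tsBase : TwoSubVert V P → V
  | Sum.inl v => v
  | Sum.inr (Sum.inl v) => v
  | Sum.inr (Sum.inr p) => p.1

lemma ts_adj_inl_eq {u v : V} {w : TwoSubVert V P}
    (h : (twoSubdivision G P).Adj (Sum.inl u) w)
    (h' : (twoSubdivision G P).Adj (Sum.inl v) w) : u = v := by
  rcases w with a | a | p
  · exact h.elim
  · exact (show u = a from h).trans (Eq.symm (show v = a from h'))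
  · exact (show u = p.1 from h).trans (Eq.symm (show v = p.1 from h'))

lemma ts_walk_short {u v : V} (p : (twoSubdivision G P).Walk (Sum.inl u) (Sum.inl v))
    (hl : p.length ≤ 2) : u = v := by
  cases p with
  | nil => rfl
  | cons h q =>
    cases q with
    | nil => exact h.elim
    | @cons w w' _ h' q' =>
      cases q' with
      | nil => exact ts_adj_inl_eq h h'.symm
      | cons h'' q'' => simp [SimpleGraph.Walk.length_cons] at hl

/-- The walk from any vertex to the original vertex at its base. -/
def tsWalkBase : (x : TwoSubVert V P) → (twoSubdivision G P).Walk x (Sum.inl (tsBase x))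
  | Sum.inl _ => SimpleGraph.Walk.nil
  | Sum.inr (Sum.inl v) => SimpleGraph.Walk.cons
      (show (twoSubdivision G P).Adj (Sum.inr (Sum.inl v)) (Sum.inl v) from rfl)
      SimpleGraph.Walk.nil
  | Sum.inr (Sum.inr p) => SimpleGraph.Walk.cons
      (show (twoSubdivision G P).Adj (Sum.inr (Sum.inr p)) (Sum.inl p.1) from rfl)
      SimpleGraph.Walk.nil

lemma tsWalkBase_length (x : TwoSubVert V P) : (tsWalkBase (G := G) x).length ≤ 1 := by
  rcases x with v | v | p <;> simp [tsWalkBase] <;> exact Nat.le_of_ble_eq_true rfl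

lemma ts_dist_le_two {x y : TwoSubVert V P} (h : tsBase x = tsBase y) :
    (twoSubdivision G P).dist x y ≤ 2 := by
  refine le_trans (SimpleGraph.dist_le ((tsWalkBase x).append
    (((tsWalkBase y).reverse).copy (by rw [h]) rfl))) ?_
  rw [SimpleGraph.Walk.length_append, SimpleGraph.Walk.length_copy,
    SimpleGraph.Walk.length_reverse]
  have h1 := tsWalkBase_length (G := G) x
  have h2 := tsWalkBase_length (G := G) y
  omega

lemma ts_reach_adj (hP : ∀ v : V, IsFinsetPartitionOf (P v) (G.neighborFinset v))
    {a b : V} (hab : G.Adj a b) :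
    (twoSubdivision G P).Reachable (Sum.inl a) (Sum.inl b) := by
  obtain ⟨A, hA, hbA⟩ := ((hP a).2.1 b).mp ((G.mem_neighborFinset a b).mpr hab)
  obtain ⟨B, hB, haB⟩ := ((hP b).2.1 a).mp ((G.mem_neighborFinset b a).mpr hab.symm)
  refine (SimpleGraph.Adj.reachable
      (show (twoSubdivision G P).Adj (Sum.inl a) (Sum.inr (Sum.inr ⟨a, ⟨A, hA⟩⟩)) from rfl)).trans
    (((show (twoSubdivision G P).Adj (Sum.inr (Sum.inr ⟨a, ⟨A, hA⟩⟩))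
      (Sum.inr (Sum.inr ⟨b, ⟨B, hB⟩⟩)) from ⟨hab, hbA, haB⟩).reachable).trans
    (SimpleGraph.Adj.reachable
      (show (twoSubdivision G P).Adj (Sum.inr (Sum.inr ⟨b, ⟨B, hB⟩⟩)) (Sum.inl b) from rfl)))

lemma ts_reach (hP : ∀ v : V, IsFinsetPartitionOf (P v) (G.neighborFinset v))
    {u v : V} (h : G.Reachable u v) :
    (twoSubdivision G P).Reachable (Sum.inl u) (Sum.inl v) := by
  obtain ⟨w⟩ := h
  induction w with
  | nil => exact SimpleGraph.Reachable.refl _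
  | cons h _ ih => exact (ts_reach_adj hP h).trans ih

end TwoSubAux

/-- In the 2-subdivision `G(P)` of a connected graph `G` of order at
least `2`, the set `V(G)` of original vertices is a maximum 2-packing, and
`ρ(G(P)) = |V(G)|`. -/
theorem twoSubdivision_max_packing {V : Type*} [Fintype V] [DecidableEq V]
    (G : SimpleGraph V) [DecidableRel G.Adj] (hconn : G.Connected)
    (h2 : 2 ≤ Fintype.card V) (P : V → Finset (Finset V))
    (hP : ∀ v : V, IsFinsetPartitionOf (P v) (G.neighborFinset v)) :
    Is2Packing (twoSubdivision G P) (Set.range (Sum.inl : V → TwoSubVert V P)) ∧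
    (∀ S : Set (TwoSubVert V P), Is2Packing (twoSubdivision G P) S →
      S.ncard ≤ (Set.range (Sum.inl : V → TwoSubVert V P)).ncard) ∧
    packingNumber (twoSubdivision G P) = Fintype.card V := by
  have hpack : Is2Packing (twoSubdivision G P) (Set.range (Sum.inl : V → TwoSubVert V P)) := by
    rintro _ ⟨u, rfl⟩ _ ⟨v, rfl⟩ hne
    have huv : u ≠ v := fun h => hne (by rw [h])
    by_contra hlt
    push_neg at hlt
    have hr := ts_reach hP (hconn.preconnected u v)
    obtain ⟨p, hp⟩ := hr.exists_walk_length_eq_dist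
    exact huv (ts_walk_short p (by omega))
  have hbound : ∀ S : Set (TwoSubVert V P), Is2Packing (twoSubdivision G P) S →
      S.ncard ≤ Fintype.card V := by
    intro S hS
    have hinj : Set.InjOn tsBase S := by
      intro x hx y hy hxy
      by_contra hne
      have h3 := hS x hx y hy hne
      have h2 := ts_dist_le_two (G := G) hxy
      omega
    calc S.ncard = (tsBase '' S).ncard := (Set.ncard_image_of_injOn hinj).symm
      _ ≤ (Set.univ : Set V).ncard := Set.ncard_le_ncard (Set.subset_univ _) (Set.toFinite _)
      _ = Fintype.card V := by rw [Set.ncard_univ, Nat.card_eq_fintype_card]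
  have hrange : (Set.range (Sum.inl : V → TwoSubVert V P)).ncard = Fintype.card V := by
    rw [← Set.image_univ, Set.ncard_image_of_injective _ Sum.inl_injective,
      Set.ncard_univ, Nat.card_eq_fintype_card]
  refine ⟨hpack, fun S hS => hrange ▸ hbound S hS, ?_⟩
  apply le_antisymm
  · apply csSup_le
    · exact ⟨0, ⟨∅, Finset.card_empty, by intro u hu; simp at hu⟩⟩
    · rintro n ⟨S, rfl, hSp⟩
      have := hbound ↑S hSp
      rwa [Set.ncard_coe_finset] at this
  · apply le_csSup
    · refine ⟨Fintype.card V, ?_⟩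
      rintro n ⟨S, rfl, hSp⟩
      have := hbound ↑S hSp
      rwa [Set.ncard_coe_finset] at this
    · refine ⟨Finset.univ.image Sum.inl, ?_, ?_⟩
      · rw [Finset.card_image_of_injective _ Sum.inl_injective, Finset.card_univ]
      · rw [Finset.coe_image, Finset.coe_univ, Set.image_univ]
        exact hpack
end

section
/- Let G be a connected graph of order at least 2 and P a family assigning to each vertex v a partition P(v) of N_G(v). Then in the 2-subdivision G(P), the set of weak support vertices is exactly V(G). -/
open SimpleGraph

variable {V : Type*}

/-- In the 2-subdivision `G(P)` of a connected graph `G` of order at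
least `2`, the set of weak support vertices is exactly `V(G)`. -/
theorem twoSubdivision_weak_supports {V : Type*} [Fintype V] [DecidableEq V]
    (G : SimpleGraph V) [DecidableRel G.Adj] (hconn : G.Connected)
    (h2 : 2 ≤ Fintype.card V) (P : V → Finset (Finset V))
    (hP : ∀ v : V, IsFinsetPartitionOf (P v) (G.neighborFinset v)) :
    {x : TwoSubVert V P | IsWeakSupport (twoSubdivision G P) x} =
      Set.range (Sum.inl : V → TwoSubVert V P) := by
  -- Every vertex of `G` has a neighbor.
  have hadj : ∀ v : V, ∃ w, G.Adj v w := by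
    intro v
    obtain ⟨u, hu⟩ := Fintype.exists_ne_of_one_lt_card (by omega) v
    obtain ⟨p⟩ := (hconn v u)
    cases p with
    | nil => exact absurd rfl hu.symm
    | cons h _ => exact ⟨_, h⟩
  -- Every vertex of `G` lies in some block of a neighbor's partition (via block existence).
  have hblock : ∀ v : V, ∀ w : V, G.Adj v w → ∃ A ∈ P v, w ∈ A := by
    intro v w hvw
    exact ((hP v).2.1 w).mp (by simpa using hvw)
  -- Characterize the leaves of the 2-subdivision.
  have hleaf : ∀ x : TwoSubVert V P,
      IsLeaf (twoSubdivision G P) x ↔ ∃ v, x = Sum.inr (Sum.inl v) := by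
    rintro (v | v | ⟨v, A, hA⟩)
    · constructor
      · rintro ⟨u, _, huniq⟩
        exfalso
        obtain ⟨w, hw⟩ := hadj v
        obtain ⟨A, hAmem, _⟩ := hblock v w hw
        have h1 : u = Sum.inr (Sum.inl v) := (huniq (Sum.inr (Sum.inl v)) rfl).symm
        have h2 : u = Sum.inr (Sum.inr ⟨v, A, hAmem⟩) := (huniq (Sum.inr (Sum.inr ⟨v, A, hAmem⟩)) rfl).symm
        rw [h1] at h2
        exact absurd (Sum.inr.inj h2) (by simp)
      · rintro ⟨w, hw⟩; cases hw
    · constructor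
      · intro _; exact ⟨v, rfl⟩
      · rintro -
        refine ⟨Sum.inl v, rfl, ?_⟩
        rintro (u | u | q) h
        · exact congrArg Sum.inl h.symm
        · exact absurd h (by simp [twoSubdivision])
        · exact absurd h (by simp [twoSubdivision])
    · constructor
      · rintro ⟨u, _, huniq⟩
        exfalso
        obtain ⟨w, hwA⟩ := (hP v).1 A hA
        have hvw : G.Adj v w := by
          have := ((hP v).2.1 w).mpr ⟨A, hA, hwA⟩
          simpa using this
        obtain ⟨B, hBmem, hvB⟩ := hblock w v hvw.symm
        have h1 : u = Sum.inl v := (huniq (Sum.inl v) rfl).symm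
        have h2 : u = Sum.inr (Sum.inr ⟨w, B, hBmem⟩) :=
          (huniq (Sum.inr (Sum.inr ⟨w, B, hBmem⟩)) ⟨hvw, hwA, hvB⟩).symm
        rw [h1] at h2; exact Sum.inl_ne_inr h2
      · rintro ⟨w, hw⟩; cases hw
  ext x
  simp only [Set.mem_setOf_eq, Set.mem_range]
  constructor
  · rintro ⟨u, ⟨huadj, huleaf⟩, -⟩
    obtain ⟨w, rfl⟩ := (hleaf u).mp huleaf
    rcases x with v | v | q
    · exact ⟨v, rfl⟩
    · exact absurd huadj (by simp [twoSubdivision])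
    · exact absurd huadj (by simp [twoSubdivision])
  · rintro ⟨v, rfl⟩
    refine ⟨Sum.inr (Sum.inl v), ⟨rfl, (hleaf _).mpr ⟨v, rfl⟩⟩, ?_⟩
    rintro y ⟨hyadj, hyleaf⟩
    obtain ⟨w, rfl⟩ := (hleaf y).mp hyleaf
    have : v = w := hyadj
    rw [this]
end

section
/- Let T be a tree of order at least 6. Then the set of weak support vertices of T is a maximum 2-packing in T if and only if T is isomorphic to a 2-subdivision R(P) of some tree R of order at least 2 with respect to some family P of partitions of the neighborhoods of the vertices of R. -/
open SimpleGraph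

variable {V : Type*}

/- ======================= auxiliary material ======================= -/
set_option linter.unusedSectionVars false

variable {V : Type*}

section Prelude
variable {G : SimpleGraph V}

lemma dist_le_one_of_adj {u v : V} (h : G.Adj u v) : G.dist u v ≤ 1 := by
  simpa using SimpleGraph.dist_le (Walk.cons h Walk.nil)

lemma dist_le_two_of_common {u v x : V} (h1 : G.Adj u x) (h2 : G.Adj x v) :
    G.dist u v ≤ 2 := by
  simpa using SimpleGraph.dist_le (Walk.cons h1 (Walk.cons h2 Walk.nil))

lemma dist_le_three_of_chain {u v x y : V} (h1 : G.Adj u x) (h2 : G.Adj x y)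
    (h3 : G.Adj y v) : G.dist u v ≤ 3 := by
  simpa using SimpleGraph.dist_le (Walk.cons h1 (Walk.cons h2 (Walk.cons h3 Walk.nil)))

lemma adj_of_dist_eq_one {u v : V} (h : G.dist u v = 1) : G.Adj u v := by
  obtain ⟨p, hp⟩ := SimpleGraph.exists_walk_of_dist_ne_zero (G := G) (u := u) (v := v) (by omega)
  exact Walk.adj_of_length_eq_one (p := p) (by omega)

lemma IsLeaf.nbr_unique {l a b : V} (hl : IsLeaf G l) (ha : G.Adj l a) (hb : G.Adj l b) :
    a = b := by
  obtain ⟨u, -, hu⟩ := hl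
  rw [hu a ha, hu b hb]

lemma mid_of_dist_eq_two {G : SimpleGraph V} {u v : V} (h : G.dist u v = 2) :
    ∃ x, G.Adj u x ∧ G.Adj x v := by
  obtain ⟨p, hp⟩ := SimpleGraph.exists_walk_of_dist_ne_zero (G := G) (u := u) (v := v) (by omega)
  rw [h] at hp
  cases p with
  | nil => simp at hp
  | cons hadj q =>
    cases q with
    | nil => simp at hp
    | cons hadj2 q2 =>
      cases q2 with
      | nil => exact ⟨_, hadj, hadj2⟩
      | cons h3 q3 => simp [SimpleGraph.Walk.length_cons] at hp

lemma three_le_dist {G : SimpleGraph V} {u v : V} (hr : G.Reachable u v) (hne : u ≠ v)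
    (hnadj : ¬ G.Adj u v)
    (hmid : ∀ x, ¬ (G.Adj u x ∧ G.Adj x v)) : 3 ≤ G.dist u v := by
  have h0 : G.dist u v ≠ 0 := fun h => hne (hr.dist_eq_zero_iff.mp h)
  have h1 : G.dist u v ≠ 1 := fun h => hnadj (adj_of_dist_eq_one h)
  have h2 : G.dist u v ≠ 2 := by
    intro h
    obtain ⟨x, hx⟩ := mid_of_dist_eq_two h
    exact hmid x hx
  omega

lemma leaf_dist (hc : G.Connected) {l s x : V} (hl : IsLeaf G l) (hs : G.Adj l s)
    (hx : x ≠ l) : G.dist x l = G.dist x s + 1 := by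
  have hub : G.dist x l ≤ G.dist x s + 1 := by
    have ht := hc.dist_triangle (u := x) (v := s) (w := l)
    have := dist_le_one_of_adj hs.symm
    omega
  have hlb : G.dist x s + 1 ≤ G.dist x l := by
    obtain ⟨p, hp⟩ := (hc l x).exists_walk_length_eq_dist
    cases p with
    | nil => exact absurd rfl hx.symm
    | cons hadj q =>
      rename_i u
      have hu : u = s := hl.nbr_unique hadj hs
      have h1 : G.dist s x ≤ q.length := by rw [← hu]; exact SimpleGraph.dist_le q
      have h2 : G.dist x s = G.dist s x := SimpleGraph.dist_comm
      have h3 : G.dist x l = G.dist l x := SimpleGraph.dist_comm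
      simp [Walk.length_cons] at hp
      omega
  omega

lemma geodesic_two_step {G : SimpleGraph V} {u v : V} (hc : G.Connected)
    (h3 : 3 ≤ G.dist u v) :
    ∃ x1 x2, G.Adj u x1 ∧ G.Adj x1 x2 ∧ G.dist x2 v + 2 ≤ G.dist u v := by
  obtain ⟨p, hp⟩ := (hc u v).exists_walk_length_eq_dist
  cases p with
  | nil => simp at hp; simp at h3
  | cons h1 q =>
    cases q with
    | nil => simp at hp; omega
    | cons h2 q2 =>
      refine ⟨_, _, h1, h2, ?_⟩
      have := SimpleGraph.dist_le q2
      simp only [Walk.length_cons] at hp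
      omega

lemma acyclic_no_triangle (hac : G.IsAcyclic) {a b c : V}
    (hab : G.Adj a b) (hbc : G.Adj b c) (hca : G.Adj c a) : False := by
  rw [isAcyclic_iff_path_unique] at hac
  have hp1 : (Walk.cons hca.symm Walk.nil : G.Walk a c).IsPath := by
    simp [Walk.isPath_def, hca.ne']
  have hp2 : (Walk.cons hab (Walk.cons hbc Walk.nil) : G.Walk a c).IsPath := by
    simp [Walk.isPath_def, hab.ne, hbc.ne, hca.symm.ne, hca.ne]
  have heq := hac ⟨_, hp1⟩ ⟨_, hp2⟩
  have := congrArg (fun p : G.Path a c => p.1.length) heq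
  simp at this

end Prelude

section Forward

variable {V : Type} [Fintype V] {T : SimpleGraph V}
variable (hT : T.IsTree) (h6 : 6 ≤ Fintype.card V)
  (hpk : Is2Packing T {v | IsWeakSupport T v})
  (hmax : ∀ S : Set V, Is2Packing T S → S.ncard ≤ {v | IsWeakSupport T v}.ncard)

include hT h6 in
lemma leaf_not_adj_leaf {l s : V} (hl : IsLeaf T l) (hs : IsLeaf T s)
    (h : T.Adj l s) : False := by
  have hc := hT.isConnected
  -- find a third vertex
  have h2 : ∃ v : V, v ≠ l ∧ v ≠ s := by
    by_contra hcon
    push_neg at hcon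
    have hsur : Function.Surjective (![l, s] : Fin 2 → V) := by
      intro v
      rcases em (v = l) with rfl | hv
      · exact ⟨0, rfl⟩
      · exact ⟨1, (hcon v hv).symm⟩
    have := Fintype.card_le_of_surjective _ hsur
    simp at this
    omega
  obtain ⟨v, hvl, hvs⟩ := h2
  have e1 : T.dist v l = T.dist v s + 1 := leaf_dist hc hl h hvl
  have e2 : T.dist v s = T.dist v l + 1 := leaf_dist hc hs h.symm hvs
  omega

include hT h6 in
lemma leaf_not_ws {l : V} (hl : IsLeaf T l) : ¬ IsWeakSupport T l := by
  rintro ⟨u, ⟨hu, hul⟩, -⟩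
  exact leaf_not_adj_leaf hT h6 hl hul hu

include hT hpk in
lemma ws_not_adj_ws {w w' : V} (hw : IsWeakSupport T w) (hw' : IsWeakSupport T w')
    (h : T.Adj w w') : False := by
  have h3 := hpk w hw w' hw' h.ne
  have := dist_le_one_of_adj h
  omega

include hT hpk in
lemma ws_nbr_unique {m w w' : V} (hw : IsWeakSupport T w) (hw' : IsWeakSupport T w')
    (h1 : T.Adj m w) (h2 : T.Adj m w') : w = w' := by
  by_contra hne
  have h3 := hpk w hw w' hw' hne
  have := dist_le_two_of_common h1.symm h2
  omega

lemma ws_leaf_unique {w l l' : V} (hw : IsWeakSupport T w) (h1 : T.Adj w l)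
    (hl : IsLeaf T l) (h2 : T.Adj w l') (hl' : IsLeaf T l') : l = l' := by
  obtain ⟨u, -, hu⟩ := hw
  rw [hu l ⟨h1, hl⟩, hu l' ⟨h2, hl'⟩]

include hT h6 hpk hmax in
lemma swap_contra {x : V} (hxW : ¬ IsWeakSupport T x)
    (hxadj : ∀ w, IsWeakSupport T w → ¬ T.Adj x w) : False := by
  classical
  have hc := hT.isConnected
  -- a chosen leaf for each weak support
  have hlamex : ∀ w : V, ∃ l, IsWeakSupport T w → (T.Adj w l ∧ IsLeaf T l) := by
    intro w
    by_cases h : IsWeakSupport T w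
    · obtain ⟨l, hl, -⟩ := h
      exact ⟨l, fun _ => hl⟩
    · exact ⟨w, fun h' => absurd h' h⟩
  choose lam hlam using hlamex
  set Wset : Set V := {v | IsWeakSupport T v} with hWset
  set D : Set V := {w | IsWeakSupport T w ∧ T.dist x w = 2} with hD
  have hDsub : D ⊆ Wset := fun w hw => hw.1
  have hlam_leaf : ∀ w ∈ D, IsLeaf T (lam w) := fun w hw => (hlam w hw.1).2
  have hlam_adj : ∀ w ∈ D, T.Adj w (lam w) := fun w hw => (hlam w hw.1).1
  have hlam_not_ws : ∀ w ∈ D, ¬ IsWeakSupport T (lam w) :=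
    fun w hw => leaf_not_ws hT h6 (hlam_leaf w hw)
  have hlam_inj : Set.InjOn lam D := by
    intro w1 h1 w2 h2 heq
    exact (hlam_leaf w1 h1).nbr_unique ((hlam_adj w1 h1).symm)
      (by rw [heq]; exact (hlam_adj w2 h2).symm)
  have hx_ne_lam : ∀ w ∈ D, x ≠ lam w := by
    intro w hw hx
    exact hxadj w hw.1 (by rw [hx]; exact (hlam_adj w hw).symm)
  have hx_not_ws : x ∉ Wset := hxW
  -- distance facts
  have hd1 : ∀ w ∈ Wset \ D, 3 ≤ T.dist x w := by
    rintro w ⟨hwW, hwD⟩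
    have h0 : T.dist x w ≠ 0 := by
      intro h
      have : x = w := (hc x w).dist_eq_zero_iff.mp h
      exact hxW (this ▸ hwW)
    have h1 : T.dist x w ≠ 1 := fun h => hxadj w hwW (adj_of_dist_eq_one h)
    have h2 : T.dist x w ≠ 2 := fun h => hwD ⟨hwW, h⟩
    omega
  have hd2 : ∀ w ∈ D, T.dist x (lam w) = 3 := by
    intro w hw
    rw [leaf_dist hc (hlam_leaf w hw) (hlam_adj w hw).symm (hx_ne_lam w hw), hw.2]
  have hlamne : ∀ w1 ∈ D, ∀ w2 ∈ D, w1 ≠ w2 → lam w1 ≠ lam w2 :=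
    fun w1 h1 w2 h2 hne heq => hne (hlam_inj h1 h2 heq)
  have hlam_ne_ws : ∀ w ∈ D, ∀ w' ∈ Wset, lam w ≠ w' := by
    intro w hw w' hw' heq
    exact hlam_not_ws w hw (heq ▸ hw')
  have hd4 : ∀ w1 ∈ D, ∀ w2 ∈ Wset, w1 ≠ w2 → 4 ≤ T.dist (lam w1) w2 := by
    intro w1 h1 w2 h2 hne
    have e1 : T.dist w2 (lam w1) = T.dist w2 w1 + 1 :=
      leaf_dist hc (hlam_leaf w1 h1) (hlam_adj w1 h1).symm
        (fun h => hlam_ne_ws w1 h1 w2 h2 h.symm)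
    have e2 := hpk w1 h1.1 w2 h2 hne
    have e3 : T.dist (lam w1) w2 = T.dist w2 (lam w1) := SimpleGraph.dist_comm
    have e4 : T.dist w2 w1 = T.dist w1 w2 := SimpleGraph.dist_comm
    omega
  have hd3 : ∀ w1 ∈ D, ∀ w2 ∈ D, w1 ≠ w2 → 5 ≤ T.dist (lam w1) (lam w2) := by
    intro w1 h1 w2 h2 hne
    have e1 : T.dist (lam w1) (lam w2) = T.dist (lam w1) w2 + 1 :=
      leaf_dist hc (hlam_leaf w2 h2) (hlam_adj w2 h2).symm
        (hlamne w1 h1 w2 h2 hne)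
    have e2 := hd4 w1 h1 w2 h2.1 hne
    omega
  -- the new packing
  set S : Set V := ((Wset \ D) ∪ lam '' D) ∪ {x} with hS
  have hSpack : Is2Packing T S := by
    have key : ∀ u ∈ S, ∀ v ∈ S, u ≠ v → 3 ≤ T.dist u v := by
      rintro u (hu | (hux : u = x)) v (hv | (hvx : v = x)) hne
      · rcases hu with hu | ⟨w1, hw1, rfl⟩ <;> rcases hv with hv | ⟨w2, hw2, rfl⟩
        · exact hpk u hu.1 v hv.1 hne
        · have := hd4 w2 hw2 u hu.1 (fun h => hu.2 (h ▸ hw2))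
          have e : T.dist u (lam w2) = T.dist (lam w2) u := SimpleGraph.dist_comm
          omega
        · have := hd4 w1 hw1 v hv.1 (fun h => hv.2 (h ▸ hw1))
          omega
        · refine le_trans (by norm_num) (hd3 w1 hw1 w2 hw2 ?_)
          intro h
          exact hne (h ▸ rfl)
      · -- v = x
        rw [hvx]
        rcases hu with hu | ⟨w1, hw1, rfl⟩
        · have := hd1 u hu
          have e : T.dist u x = T.dist x u := SimpleGraph.dist_comm
          omega
        · have := hd2 w1 hw1
          have e : T.dist (lam w1) x = T.dist x (lam w1) := SimpleGraph.dist_comm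
          omega
      · rw [hux]
        rcases hv with hv | ⟨w2, hw2, rfl⟩
        · exact hd1 v hv
        · have := hd2 w2 hw2
          omega
      · exact absurd (hux.trans hvx.symm) hne
    exact key
  have hcard : S.ncard = Wset.ncard + 1 := by
    have hWfin : Wset.Finite := Set.toFinite _
    have hDfin : D.Finite := Set.toFinite _
    have h1 : ((Wset \ D) ∪ lam '' D).ncard = (Wset \ D).ncard + (lam '' D).ncard := by
      refine Set.ncard_union_eq ?_ hWfin.diff (hDfin.image _)
      rw [Set.disjoint_left]
      rintro a ⟨haW, -⟩ ⟨w, hw, rfl⟩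
      exact hlam_not_ws w hw haW
    have h2 : (Wset \ D).ncard = Wset.ncard - D.ncard := Set.ncard_diff hDsub
    have h3 : (lam '' D).ncard = D.ncard := Set.ncard_image_of_injOn hlam_inj
    have h4 : D.ncard ≤ Wset.ncard := Set.ncard_le_ncard hDsub hWfin
    have h5 : x ∉ (Wset \ D) ∪ lam '' D := by
      rintro (⟨haW, -⟩ | ⟨w, hw, heq⟩)
      · exact hxW haW
      · exact hx_ne_lam w hw heq.symm
    have h6 : S = insert x ((Wset \ D) ∪ lam '' D) := by
      rw [hS, Set.union_singleton]
    rw [h6, Set.ncard_insert_of_notMem h5, h1, h2, h3]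
    omega
  have := hmax S hSpack
  rw [hcard] at this
  omega

end Forward

section Forward2

variable {V : Type} [Fintype V] {T : SimpleGraph V}
variable (hT : T.IsTree) (h6 : 6 ≤ Fintype.card V)
  (hpk : Is2Packing T {v | IsWeakSupport T v})
  (hmax : ∀ S : Set V, Is2Packing T S → S.ncard ≤ {v | IsWeakSupport T v}.ncard)

include hT h6 hpk hmax in
lemma support_ws {l s : V} (hl : IsLeaf T l) (hs : T.Adj l s) : IsWeakSupport T s := by
  by_contra hsW
  refine swap_contra hT h6 hpk hmax (x := l) (leaf_not_ws hT h6 hl) ?_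
  intro w hw hadj
  exact hsW ((hl.nbr_unique hadj hs) ▸ hw)

include hT h6 hpk hmax in
lemma m_nbr {m : V} (h1 : ¬ IsWeakSupport T m) (h2 : ¬ IsLeaf T m) :
    ∃ w, IsWeakSupport T w ∧ T.Adj m w := by
  by_contra hcon
  push_neg at hcon
  exact swap_contra hT h6 hpk hmax h1 (fun w hw hadj => hcon w hw hadj)

include hT h6 hpk hmax in
lemma m_second {m : V} (h1 : ¬ IsWeakSupport T m) (h2 : ¬ IsLeaf T m) :
    ∃ m', T.Adj m m' ∧ ¬ IsWeakSupport T m' ∧ ¬ IsLeaf T m' := by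
  obtain ⟨w, hw, hmw⟩ := m_nbr hT h6 hpk hmax h1 h2
  -- m is not a leaf, so it has a second neighbour
  have h3 : ∃ y, T.Adj m y ∧ y ≠ w := by
    by_contra hcon
    push_neg at hcon
    exact h2 ⟨w, hmw, fun y hy => hcon y hy⟩
  obtain ⟨y, hy, hyw⟩ := h3
  refine ⟨y, hy, ?_, ?_⟩
  · intro hyws
    exact hyw (ws_nbr_unique hT hpk hyws hw hy hmw)
  · intro hyl
    exact h1 (support_ws hT h6 hpk hmax hyl hy.symm)

include hT hpk in
lemma mm_distinct_ws {m m' w w' : V}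
    (hadj : T.Adj m m') (hw : IsWeakSupport T w) (hw' : IsWeakSupport T w')
    (h1 : T.Adj m w) (h2 : T.Adj m' w') : w ≠ w' := by
  rintro rfl
  exact acyclic_no_triangle hT.2 h1.symm hadj h2

include hT in
lemma config_unique {w w' a1 a2 b1 b2 : V}
    (hww' : w ≠ w')
    (hwa1 : ¬ IsWeakSupport T a1) (hla1 : ¬ IsLeaf T a1)
    (hwa2 : ¬ IsWeakSupport T a2) (hla2 : ¬ IsLeaf T a2)
    (hwb1 : ¬ IsWeakSupport T b1) (hlb1 : ¬ IsLeaf T b1)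
    (hwb2 : ¬ IsWeakSupport T b2) (hlb2 : ¬ IsLeaf T b2)
    (hw : IsWeakSupport T w) (hw' : IsWeakSupport T w')
    (e1 : T.Adj w a1) (e2 : T.Adj a1 a2) (e3 : T.Adj a2 w')
    (f1 : T.Adj w b1) (f2 : T.Adj b1 b2) (f3 : T.Adj b2 w') :
    a1 = b1 ∧ a2 = b2 := by
  have hup := hT.existsUnique_path w w'
  have hWa1 : w ≠ a1 := fun h => hwa1 (h ▸ hw)
  have hWa2 : w ≠ a2 := fun h => hwa2 (h ▸ hw)
  have hW'a1 : a1 ≠ w' := fun h => hwa1 (h ▸ hw')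
  have hW'a2 : a2 ≠ w' := fun h => hwa2 (h ▸ hw')
  have hWb1 : w ≠ b1 := fun h => hwb1 (h ▸ hw)
  have hWb2 : w ≠ b2 := fun h => hwb2 (h ▸ hw)
  have hW'b1 : b1 ≠ w' := fun h => hwb1 (h ▸ hw')
  have hW'b2 : b2 ≠ w' := fun h => hwb2 (h ▸ hw')
  have hp1 : (Walk.cons e1 (Walk.cons e2 (Walk.cons e3 Walk.nil)) : T.Walk w w').IsPath := by
    simp [Walk.isPath_def, hWa1, hWa2, hww', e2.ne, hW'a1, hW'a2]
  have hp2 : (Walk.cons f1 (Walk.cons f2 (Walk.cons f3 Walk.nil)) : T.Walk w w').IsPath := by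
    simp [Walk.isPath_def, hWb1, hWb2, hww', f2.ne, hW'b1, hW'b2]
  have heq := hup.unique hp1 hp2
  have hsup := congrArg Walk.support heq
  simp [Walk.support_cons] at hsup
  exact ⟨hsup.1, hsup.2⟩

include hT h6 hpk hmax in
lemma inner_M {m m'' w' : V} (h1 : ¬ IsWeakSupport T m) (h2 : ¬ IsLeaf T m)
    (hadj : T.Adj m m'') (hadj2 : T.Adj m'' w') (hw' : IsWeakSupport T w') :
    ¬ IsWeakSupport T m'' ∧ ¬ IsLeaf T m'' := by
  constructor
  · intro hws
    exact ws_not_adj_ws hT hpk hws hw' hadj2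
  · intro hl
    exact h1 (support_ws hT h6 hpk hmax hl hadj.symm)

include hT h6 hpk hmax in
lemma ws_nonempty : {v | IsWeakSupport T v}.Nonempty := by
  have hne : Nonempty V := Fintype.card_pos_iff.mp (by omega)
  obtain ⟨v⟩ := hne
  have hpack : Is2Packing T {v} := by
    intro a ha b hb hne
    rw [Set.mem_singleton_iff] at ha hb
    exact absurd (ha.trans hb.symm) hne
  have := hmax {v} hpack
  rw [Set.ncard_singleton] at this
  exact Set.nonempty_of_ncard_ne_zero (by omega)

end Forward2

section ForwardMain

variable {V : Type} [Fintype V] {T : SimpleGraph V}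
variable (hT : T.IsTree) (h6 : 6 ≤ Fintype.card V)
  (hpk : Is2Packing T {v | IsWeakSupport T v})
  (hmax : ∀ S : Set V, Is2Packing T S → S.ncard ≤ {v | IsWeakSupport T v}.ncard)

include hT h6 hpk hmax in
lemma forward_main :
    ∃ (W : Type) (_ : Fintype W) (_ : DecidableEq W) (R : SimpleGraph W)
      (_ : DecidableRel R.Adj) (P : W → Finset (Finset W)),
        R.IsTree ∧ 2 ≤ Fintype.card W ∧
        (∀ v : W, IsFinsetPartitionOf (P v) (R.neighborFinset v)) ∧
        Nonempty (T ≃g twoSubdivision R P) := by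
  classical
  have hc := hT.isConnected
  -- chosen leaf of each weak support
  have hlamex : ∀ w : V, ∃ l, IsWeakSupport T w → (T.Adj w l ∧ IsLeaf T l) := by
    intro w
    by_cases h : IsWeakSupport T w
    · obtain ⟨l, hl, -⟩ := h
      exact ⟨l, fun _ => hl⟩
    · exact ⟨w, fun h' => absurd h' h⟩
  choose lam hlam using hlamex
  -- chosen weak-support neighbour of each leaf
  have hsigex : ∀ v : V, ∃ w, IsLeaf T v → (T.Adj v w ∧ IsWeakSupport T w) := by
    intro v
    by_cases h : IsLeaf T v
    · obtain ⟨u, hu, huniq⟩ := h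
      have hl : IsLeaf T v := ⟨u, hu, huniq⟩
      exact ⟨u, fun _ => ⟨hu, support_ws hT h6 hpk hmax hl hu⟩⟩
    · exact ⟨v, fun h' => absurd h' h⟩
  choose sig hsig using hsigex
  -- chosen weak-support neighbour of each middle vertex
  have hsupex : ∀ v : V, ∃ w, ¬ IsWeakSupport T v → ¬ IsLeaf T v →
      (IsWeakSupport T w ∧ T.Adj v w) := by
    intro v
    by_cases h1 : IsWeakSupport T v
    · exact ⟨v, fun h' => absurd h1 h'⟩
    by_cases h2 : IsLeaf T v
    · exact ⟨v, fun _ h' => absurd h2 h'⟩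
    · obtain ⟨w, hw, hadj⟩ := m_nbr hT h6 hpk hmax h1 h2
      exact ⟨w, fun _ _ => ⟨hw, hadj⟩⟩
  choose sup hsup using hsupex
  -- the tree R
  obtain ⟨R, hRadj⟩ : ∃ R : SimpleGraph {v : V // IsWeakSupport T v},
      ∀ a b, R.Adj a b ↔ (a ≠ b ∧ ∃ m m', T.Adj a.1 m ∧ T.Adj m m' ∧ T.Adj m' b.1) := by
    refine ⟨⟨fun a b => a ≠ b ∧ ∃ m m', T.Adj a.1 m ∧ T.Adj m m' ∧ T.Adj m' b.1, ?_, ?_⟩,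
      fun a b => Iff.rfl⟩
    · constructor
      rintro a b ⟨hne, m, m', e1, e2, e3⟩
      exact ⟨hne.symm, m', m, e3.symm, e2.symm, e1.symm⟩
    · constructor
      rintro a ⟨hne, -⟩
      exact hne rfl
  -- the blocks
  obtain ⟨blk, hblk⟩ : ∃ blk : V → Finset {v : V // IsWeakSupport T v},
      ∀ m w', w' ∈ blk m ↔ ∃ m', T.Adj m m' ∧ T.Adj m' w'.1 :=
    ⟨fun m => Finset.univ.filter (fun w' => ∃ m', T.Adj m m' ∧ T.Adj m' w'.1),
      fun m w' => by simp⟩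
  -- the partitions
  obtain ⟨P, hP⟩ : ∃ P : {v : V // IsWeakSupport T v} →
        Finset (Finset {v : V // IsWeakSupport T v}),
      ∀ w A, A ∈ P w ↔ ∃ m, T.Adj w.1 m ∧ ¬ IsLeaf T m ∧ blk m = A :=
    ⟨fun w => (Finset.univ.filter (fun m => T.Adj w.1 m ∧ ¬ IsLeaf T m)).image blk,
      fun w A => by
        simp only [Finset.mem_image, Finset.mem_filter, Finset.mem_univ, true_and]
        constructor
        · rintro ⟨m, ⟨h1, h2⟩, h3⟩; exact ⟨m, h1, h2, h3⟩
        · rintro ⟨m, h1, h2, h3⟩; exact ⟨m, ⟨h1, h2⟩, h3⟩⟩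
  -- basic facts
  have hWSnbr : ∀ (w : {v : V // IsWeakSupport T v}) m, T.Adj w.1 m →
      ¬ IsWeakSupport T m := fun w m h hm => ws_not_adj_ws hT hpk w.2 hm h
  have hx2nel : ∀ (w : {v : V // IsWeakSupport T v}) m m' (x : {v : V // IsWeakSupport T v}),
      T.Adj w.1 m → T.Adj m m' → T.Adj m' x.1 → ¬ IsLeaf T m := by
    intro w m m' x e1 e2 e3 hl
    have h1 : m' = w.1 := hl.nbr_unique e2 e1.symm
    rw [h1] at e3
    exact ws_not_adj_ws hT hpk w.2 x.2 e3
  -- gate uniqueness: the witnessing (m, m') pair of an R-edge is unique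
  have hinnerM : ∀ m m' (x : {v : V // IsWeakSupport T v}), ¬ IsWeakSupport T m →
      ¬ IsLeaf T m → T.Adj m m' → T.Adj m' x.1 →
      ¬ IsWeakSupport T m' ∧ ¬ IsLeaf T m' :=
    fun m m' x h1 h2 e2 e3 => inner_M hT h6 hpk hmax h1 h2 e2 e3 x.2
  have hgateU : ∀ (w x : {v : V // IsWeakSupport T v}) m1 m1' m2 m2',
      T.Adj w.1 m1 → ¬ IsLeaf T m1 → T.Adj m1 m1' → T.Adj m1' x.1 →
      T.Adj w.1 m2 → ¬ IsLeaf T m2 → T.Adj m2 m2' → T.Adj m2' x.1 →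
      m1 = m2 ∧ m1' = m2' := by
    intro w x m1 m1' m2 m2' e1 hm1L e2 e3 f1 hm2L f2 f3
    have hm1W : ¬ IsWeakSupport T m1 := hWSnbr w m1 e1
    have hm2W : ¬ IsWeakSupport T m2 := hWSnbr w m2 f1
    obtain ⟨hm1'W, hm1'L⟩ := hinnerM m1 m1' x hm1W hm1L e2 e3
    obtain ⟨hm2'W, hm2'L⟩ := hinnerM m2 m2' x hm2W hm2L f2 f3
    have hne : w.1 ≠ x.1 := by
      intro h
      rw [← h] at e3
      exact acyclic_no_triangle hT.2 e1 e2 e3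
    exact config_unique hT hne hm1W hm1L hm1'W hm1'L hm2W hm2L hm2'W hm2'L
      w.2 x.2 e1 e2 e3 f1 f2 f3
  -- every middle vertex's block is nonempty
  have hblk_ne : ∀ m, ¬ IsWeakSupport T m → ¬ IsLeaf T m → (blk m).Nonempty := by
    intro m h1 h2
    obtain ⟨m', hadj, hm'W, hm'L⟩ := m_second hT h6 hpk hmax h1 h2
    refine ⟨⟨sup m', (hsup m' hm'W hm'L).1⟩, ?_⟩
    rw [hblk]
    exact ⟨m', hadj, (hsup m' hm'W hm'L).2⟩
  -- membership of blk v in P (sup v)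
  have hblkP : ∀ v (h1 : ¬ IsWeakSupport T v) (h2 : ¬ IsLeaf T v),
      blk v ∈ P ⟨sup v, (hsup v h1 h2).1⟩ := by
    intro v h1 h2
    rw [hP]
    exact ⟨v, (hsup v h1 h2).2.symm, h2, rfl⟩
  -- partition property pieces
  have hpart1 : ∀ w, ∀ A ∈ P w, A.Nonempty := by
    intro w A hA
    rw [hP] at hA
    obtain ⟨m, e1, hmL, rfl⟩ := hA
    exact hblk_ne m (hWSnbr w m e1) hmL
  have hcov : ∀ w x, R.Adj w x ↔ ∃ A ∈ P w, x ∈ A := by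
    intro w x
    rw [hRadj]
    constructor
    · rintro ⟨hne, m, m', e1, e2, e3⟩
      have hmL : ¬ IsLeaf T m := hx2nel w m m' x e1 e2 e3
      refine ⟨blk m, ?_, ?_⟩
      · rw [hP]; exact ⟨m, e1, hmL, rfl⟩
      · rw [hblk]; exact ⟨m', e2, e3⟩
    · rintro ⟨A, hA, hxA⟩
      rw [hP] at hA
      obtain ⟨m, e1, hmL, rfl⟩ := hA
      rw [hblk] at hxA
      obtain ⟨m', e2, e3⟩ := hxA
      refine ⟨?_, m, m', e1, e2, e3⟩
      intro h
      rw [← h] at e3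
      exact acyclic_no_triangle hT.2 e1 e2 e3
  have hpart3 : ∀ w, ∀ A ∈ P w, ∀ B ∈ P w, A ≠ B → Disjoint A B := by
    intro w A hA B hB hAB
    rw [hP] at hA hB
    obtain ⟨m1, e1, hm1L, rfl⟩ := hA
    obtain ⟨m2, f1, hm2L, rfl⟩ := hB
    rw [Finset.disjoint_left]
    intro x hxA hxB
    rw [hblk] at hxA hxB
    obtain ⟨m1', e2, e3⟩ := hxA
    obtain ⟨m2', f2, f3⟩ := hxB
    exact hAB (by rw [(hgateU w x m1 m1' m2 m2' e1 hm1L e2 e3 f1 hm2L f2 f3).1])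
  -- at least two weak supports
  have hW0 : {v | IsWeakSupport T v}.Nonempty := ws_nonempty hT h6 hpk hmax
  obtain ⟨w0, hw0⟩ := hW0
  have hcard2 : 2 ≤ Fintype.card {v : V // IsWeakSupport T v} := by
    by_contra hcon
    push_neg at hcon
    have huniq : ∀ a b : {v : V // IsWeakSupport T v}, a = b :=
      fun a b => Fintype.card_le_one_iff.mp (by omega) a b
    have hM : ∀ v, ¬ IsWeakSupport T v → ¬ IsLeaf T v → False := by
      intro m h1 h2
      obtain ⟨m', hadj, hm'W, hm'L⟩ := m_second hT h6 hpk hmax h1 h2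
      have hne := mm_distinct_ws hT hpk hadj (hsup m h1 h2).1 (hsup m' hm'W hm'L).1
        (hsup m h1 h2).2 (hsup m' hm'W hm'L).2
      exact hne (congrArg Subtype.val
        (huniq ⟨sup m, (hsup m h1 h2).1⟩ ⟨sup m', (hsup m' hm'W hm'L).1⟩))
    have hall : ∀ v : V, v = w0 ∨ v = lam w0 := by
      intro v
      by_cases h1 : IsWeakSupport T v
      · exact Or.inl (congrArg Subtype.val (huniq ⟨v, h1⟩ ⟨w0, hw0⟩))
      by_cases h2 : IsLeaf T v
      · right
        have hs : sig v = w0 := congrArg Subtype.val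
          (huniq ⟨sig v, (hsig v h2).2⟩ ⟨w0, hw0⟩)
        have hadj : T.Adj w0 v := by rw [← hs]; exact (hsig v h2).1.symm
        exact ws_leaf_unique hw0 hadj h2 (hlam w0 hw0).1 (hlam w0 hw0).2
      · exact absurd (hM v h1 h2) id
    have hsur : Function.Surjective (![w0, lam w0] : Fin 2 → V) := by
      intro v
      rcases hall v with rfl | rfl
      · exact ⟨0, rfl⟩
      · exact ⟨1, rfl⟩
    have := Fintype.card_le_of_surjective _ hsur
    simp at this
    omega
  -- connectivity of R
  have hconnR : R.Connected := by
    rw [connected_iff]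
    refine ⟨?_, ⟨⟨w0, hw0⟩⟩⟩
    have key : ∀ n (w w' : {v : V // IsWeakSupport T v}), T.dist w.1 w'.1 ≤ n →
        R.Reachable w w' := by
      intro n
      induction n with
      | zero =>
        intro w w' h
        have h0 : T.dist w.1 w'.1 = 0 := Nat.le_zero.mp h
        have : w.1 = w'.1 := (hc w.1 w'.1).dist_eq_zero_iff.mp h0
        rw [Subtype.ext this]
      | succ n ih =>
        intro w w' hd
        by_cases hww' : w = w'
        · rw [hww']
        · have hne3 : 3 ≤ T.dist w.1 w'.1 :=
            hpk _ w.2 _ w'.2 (fun h => hww' (Subtype.ext h))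
          obtain ⟨x1, x2, h1, h2, hx2d⟩ := geodesic_two_step hc hne3
          have hx2ne : x2 ≠ w.1 := by
            intro h
            rw [h] at hx2d
            omega
          have hx1W : ¬ IsWeakSupport T x1 := hWSnbr w x1 h1
          have hx1L : ¬ IsLeaf T x1 := by
            intro hl
            exact hx2ne (hl.nbr_unique h2 h1.symm)
          have hx2W : ¬ IsWeakSupport T x2 := by
            intro hws
            have := hpk _ w.2 _ hws (fun h => hx2ne h.symm)
            have := dist_le_two_of_common h1 h2
            have e : T.dist w.1 x2 = T.dist x2 w.1 := SimpleGraph.dist_comm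
            omega
          have hx2L : ¬ IsLeaf T x2 := by
            intro hl
            have hwne : w'.1 ≠ x2 := by
              intro h
              exact leaf_not_ws hT h6 (by rw [← h] at hl; exact hl) w'.2
            have e1 : T.dist w'.1 x2 = T.dist w'.1 x1 + 1 :=
              leaf_dist hc hl h2.symm hwne
            have e2 : T.dist w.1 w'.1 ≤ 1 + T.dist x1 w'.1 := by
              have htri := hc.dist_triangle (u := w.1) (v := x1) (w := w'.1)
              have := dist_le_one_of_adj h1
              omega
            have e3 : T.dist w'.1 x1 = T.dist x1 w'.1 := SimpleGraph.dist_comm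
            have e4 : T.dist w'.1 x2 = T.dist x2 w'.1 := SimpleGraph.dist_comm
            omega
          have hu := hsup x2 hx2W hx2L
          have hadjwu : R.Adj w ⟨sup x2, hu.1⟩ := by
            rw [hRadj]
            refine ⟨?_, x1, x2, h1, h2, hu.2⟩
            intro h
            have hv : sup x2 = w.1 := (congrArg Subtype.val h).symm
            rw [hv] at hu
            exact acyclic_no_triangle hT.2 h1 h2 hu.2
          have hdu : T.dist (sup x2) w'.1 ≤ n := by
            have htri := hc.dist_triangle (u := sup x2) (v := x2) (w := w'.1)
            have h9 := dist_le_one_of_adj hu.2.symm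
            omega
          exact (hadjwu.reachable).trans (ih ⟨sup x2, hu.1⟩ w' hdu)
    intro w w'
    exact key (T.dist w.1 w'.1) w w' le_rfl
  -- acyclicity of R
  have hacyc : R.IsAcyclic := by
    rw [isAcyclic_iff_forall_adj_isBridge]
    intro w w' hadj
    rw [isBridge_iff_adj_and_forall_walk_mem_edges]
    refine fun p => ?_
    by_contra hnotmem
    obtain ⟨hne0, m, m', hm1, hm2, hm3⟩ := (hRadj w w').mp hadj
    have hmW : ¬ IsWeakSupport T m := hWSnbr w m hm1
    have hmL : ¬ IsLeaf T m := hx2nel w m m' w' hm1 hm2 hm3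
    obtain ⟨hm'W, hm'L⟩ := hinnerM m m' w' hmW hmL hm2 hm3
    -- lifting R-walks avoiding s(w,w') to T-walks avoiding s(m,m')
    have hlift : ∀ (a b : {v : V // IsWeakSupport T v}) (q : R.Walk a b),
        s(w, w') ∉ q.edges → ∃ t : T.Walk a.1 b.1, s(m, m') ∉ t.edges := by
      intro a b q
      induction q with
      | nil => exact fun _ => ⟨Walk.nil, by simp⟩
      | @cons a0 c0 b0 hadj' q' ih =>
        intro hh
        rw [Walk.edges_cons, List.mem_cons] at hh
        push_neg at hh
        obtain ⟨t, ht⟩ := ih hh.2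
        obtain ⟨hne', g1, g2, e1, e2, e3⟩ := (hRadj a0 c0).mp hadj'
        have hg1W : ¬ IsWeakSupport T g1 := hWSnbr a0 g1 e1
        have hg1L : ¬ IsLeaf T g1 := hx2nel a0 g1 g2 c0 e1 e2 e3
        obtain ⟨hg2W, hg2L⟩ := hinnerM g1 g2 c0 hg1W hg1L e2 e3
        refine ⟨Walk.cons e1 (Walk.cons e2 (Walk.cons e3 t)), ?_⟩
        simp only [Walk.edges_cons, List.mem_cons]
        push_neg
        refine ⟨?_, ?_, ?_, ht⟩
        · intro heq
          rcases Sym2.eq_iff.mp heq with ⟨h1m, h2m⟩ | ⟨h1m, h2m⟩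
          · exact hmW (by rw [h1m]; exact a0.2)
          · exact hm'W (by rw [h2m]; exact a0.2)
        · intro heq
          rcases Sym2.eq_iff.mp heq with ⟨h1m, h2m⟩ | ⟨h1m, h2m⟩
          · have ha : w.1 = a0.1 := by
              refine ws_nbr_unique hT hpk w.2 a0.2 hm1.symm ?_
              rw [h1m]
              exact e1.symm
            have hcw : w'.1 = c0.1 := by
              refine ws_nbr_unique hT hpk w'.2 c0.2 hm3 ?_
              rw [h2m]
              exact e3
            exact hh.1 (by rw [Subtype.ext ha, Subtype.ext hcw])
          · have hcw : w.1 = c0.1 := by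
              refine ws_nbr_unique hT hpk w.2 c0.2 hm1.symm ?_
              rw [h1m]
              exact e3
            have ha : w'.1 = a0.1 := by
              refine ws_nbr_unique hT hpk w'.2 a0.2 hm3 ?_
              rw [h2m]
              exact e1.symm
            refine hh.1 ?_
            rw [Subtype.ext ha, Subtype.ext hcw, Sym2.eq_swap]
        · intro heq
          rcases Sym2.eq_iff.mp heq with ⟨h1m, h2m⟩ | ⟨h1m, h2m⟩
          · exact hm'W (by rw [h2m]; exact c0.2)
          · exact hmW (by rw [h1m]; exact c0.2)
    obtain ⟨t, ht⟩ := hlift w w' p hnotmem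
    -- a walk from m to m' avoiding the edge s(m,m'), contradicting acyclicity of T
    have hbr := (isAcyclic_iff_forall_adj_isBridge.mp hT.2) hm2
    rw [isBridge_iff_adj_and_forall_walk_mem_edges] at hbr
    have hmem := hbr (Walk.cons hm1.symm (t.append (Walk.cons hm3.symm Walk.nil)))
    simp only [Walk.edges_cons, Walk.edges_append, Walk.edges_nil, List.mem_cons,
      List.mem_append, List.mem_singleton, List.not_mem_nil, or_false] at hmem
    rcases hmem with h' | h' | h'
    · rcases Sym2.eq_iff.mp h' with ⟨-, h'⟩ | ⟨h', -⟩
      · exact hm'W (by rw [h']; exact w.2)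
      · exact hmW (by rw [h']; exact w.2)
    · exact ht h'
    · rcases Sym2.eq_iff.mp h' with ⟨h', -⟩ | ⟨-, h'⟩
      · exact hmW (by rw [h']; exact w'.2)
      · exact hm'W (by rw [h']; exact w'.2)
  -- the vertex map
  obtain ⟨f, hfW, hfL, hfM⟩ :
      ∃ f : V → TwoSubVert {v : V // IsWeakSupport T v} P,
        (∀ v (h : IsWeakSupport T v), f v = Sum.inl ⟨v, h⟩) ∧
        (∀ v (h1 : ¬ IsWeakSupport T v) (h2 : IsLeaf T v),
          f v = Sum.inr (Sum.inl ⟨sig v, (hsig v h2).2⟩)) ∧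
        (∀ v (h1 : ¬ IsWeakSupport T v) (h2 : ¬ IsLeaf T v),
          f v = Sum.inr (Sum.inr ⟨⟨sup v, (hsup v h1 h2).1⟩, ⟨blk v, hblkP v h1 h2⟩⟩)) := by
    refine ⟨fun v =>
      if h : IsWeakSupport T v then Sum.inl ⟨v, h⟩
      else if h2 : IsLeaf T v then Sum.inr (Sum.inl ⟨sig v, (hsig v h2).2⟩)
      else Sum.inr (Sum.inr ⟨⟨sup v, (hsup v h h2).1⟩, ⟨blk v, hblkP v h h2⟩⟩), ?_, ?_, ?_⟩
    · intro v h; simp only [dif_pos h]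
    · intro v h1 h2; simp only [dif_neg h1, dif_pos h2]
    · intro v h1 h2; simp only [dif_neg h1, dif_neg h2]
  have tri : ∀ v : V, IsWeakSupport T v ∨ (¬ IsWeakSupport T v ∧ IsLeaf T v) ∨
      (¬ IsWeakSupport T v ∧ ¬ IsLeaf T v) := by
    intro v
    by_cases h1 : IsWeakSupport T v
    · exact Or.inl h1
    by_cases h2 : IsLeaf T v
    · exact Or.inr (Or.inl ⟨h1, h2⟩)
    · exact Or.inr (Or.inr ⟨h1, h2⟩)
  -- injectivity
  have hinj : Function.Injective f := by
    intro a b hab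
    rcases tri a with ha | ⟨ha, ha2⟩ | ⟨ha, ha2⟩ <;>
      rcases tri b with hb | ⟨hb, hb2⟩ | ⟨hb, hb2⟩
    · rw [hfW a ha, hfW b hb] at hab
      simpa using hab
    · rw [hfW a ha, hfL b hb hb2] at hab; simp at hab
    · rw [hfW a ha, hfM b hb hb2] at hab; simp at hab
    · rw [hfL a ha ha2, hfW b hb] at hab; simp at hab
    · rw [hfL a ha ha2, hfL b hb hb2] at hab
      simp only [Sum.inr.injEq, Sum.inl.injEq, Subtype.mk.injEq] at hab
      refine ws_leaf_unique (T := T) (hsig a ha2).2 (hsig a ha2).1.symm ha2 ?_ hb2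
      rw [hab]
      exact (hsig b hb2).1.symm
    · rw [hfL a ha ha2, hfM b hb hb2] at hab; simp at hab
    · rw [hfM a ha ha2, hfW b hb] at hab; simp at hab
    · rw [hfM a ha ha2, hfL b hb hb2] at hab; simp at hab
    · rw [hfM a ha ha2, hfM b hb hb2] at hab
      simp only [Sum.inr.injEq] at hab
      have h1 : sup a = sup b :=
        congrArg (fun s : (Σ w : {v : V // IsWeakSupport T v}, {A // A ∈ P w}) => s.1.1) hab
      have h2 : blk a = blk b :=
        congrArg (fun s : (Σ w : {v : V // IsWeakSupport T v}, {A // A ∈ P w}) =>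
          (s.2.1 : Finset {v : V // IsWeakSupport T v})) hab
      obtain ⟨x, hx⟩ := hblk_ne a ha ha2
      have hx2 : x ∈ blk b := by rw [← h2]; exact hx
      rw [hblk] at hx hx2
      obtain ⟨m1', e2, e3⟩ := hx
      obtain ⟨m2', f2, f3⟩ := hx2
      have hadjb : T.Adj (sup a) b := by
        rw [h1]
        exact (hsup b hb hb2).2.symm
      exact (hgateU ⟨sup a, (hsup a ha ha2).1⟩ x a m1' b m2'
        (hsup a ha ha2).2.symm ha2 e2 e3 hadjb hb2 f2 f3).1
  -- surjectivity
  have hsurj : Function.Surjective f := by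
    rintro (x | x | ⟨x, A, hA⟩)
    · exact ⟨x.1, by rw [hfW x.1 x.2]⟩
    · refine ⟨lam x.1, ?_⟩
      have hl := hlam x.1 x.2
      have hlW : ¬ IsWeakSupport T (lam x.1) := leaf_not_ws hT h6 hl.2
      rw [hfL (lam x.1) hlW hl.2]
      have hsx : sig (lam x.1) = x.1 := (hl.2).nbr_unique (hsig (lam x.1) hl.2).1 hl.1.symm
      exact congrArg (Sum.inr ∘ Sum.inl) (Subtype.ext hsx)
    · obtain ⟨mm, e1, hmmL, hblkeq⟩ := (hP x A).mp hA
      have hmmW : ¬ IsWeakSupport T mm := hWSnbr x mm e1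
      refine ⟨mm, ?_⟩
      rw [hfM mm hmmW hmmL]
      subst hblkeq
      have hsupeq : (⟨sup mm, (hsup mm hmmW hmmL).1⟩ : {v : V // IsWeakSupport T v}) = x :=
        Subtype.ext (ws_nbr_unique hT hpk (hsup mm hmmW hmmL).1 x.2
          (hsup mm hmmW hmmL).2 e1.symm)
      subst hsupeq
      rfl
  -- adjacency correspondence
  have hadj_iff : ∀ a b : V, (twoSubdivision R P).Adj (f a) (f b) ↔ T.Adj a b := by
    intro a b
    rcases tri a with ha | ⟨ha, ha2⟩ | ⟨ha, ha2⟩ <;>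
      rcases tri b with hb | ⟨hb, hb2⟩ | ⟨hb, hb2⟩
    · rw [hfW a ha, hfW b hb]
      exact iff_of_false (fun h => h) (fun h => ws_not_adj_ws hT hpk ha hb h)
    · rw [hfW a ha, hfL b hb hb2]
      constructor
      · intro h
        have h' : a = sig b := congrArg Subtype.val
          (h : (⟨a, ha⟩ : {v : V // IsWeakSupport T v}) = ⟨sig b, (hsig b hb2).2⟩)
        rw [h']
        exact (hsig b hb2).1.symm
      · intro h
        show (⟨a, ha⟩ : {v : V // IsWeakSupport T v}) = ⟨sig b, (hsig b hb2).2⟩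
        exact Subtype.ext (hb2.nbr_unique h.symm (hsig b hb2).1)
    · rw [hfW a ha, hfM b hb hb2]
      constructor
      · intro h
        have h' : a = sup b := congrArg Subtype.val
          (h : (⟨a, ha⟩ : {v : V // IsWeakSupport T v}) = ⟨sup b, (hsup b hb hb2).1⟩)
        rw [h']
        exact (hsup b hb hb2).2.symm
      · intro h
        show (⟨a, ha⟩ : {v : V // IsWeakSupport T v}) = ⟨sup b, (hsup b hb hb2).1⟩
        exact Subtype.ext (ws_nbr_unique hT hpk ha (hsup b hb hb2).1 h.symm (hsup b hb hb2).2)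
    · rw [hfL a ha ha2, hfW b hb]
      constructor
      · intro h
        have h' : sig a = b := congrArg Subtype.val
          (h : (⟨sig a, (hsig a ha2).2⟩ : {v : V // IsWeakSupport T v}) = ⟨b, hb⟩)
        rw [← h']
        exact (hsig a ha2).1
      · intro h
        show (⟨sig a, (hsig a ha2).2⟩ : {v : V // IsWeakSupport T v}) = ⟨b, hb⟩
        exact Subtype.ext (ha2.nbr_unique (hsig a ha2).1 h)
    · rw [hfL a ha ha2, hfL b hb hb2]
      exact iff_of_false (fun h => h) (fun h => leaf_not_adj_leaf hT h6 ha2 hb2 h)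
    · rw [hfL a ha ha2, hfM b hb hb2]
      refine iff_of_false (fun h => h) (fun h => ?_)
      refine hb ?_
      rw [ha2.nbr_unique h (hsig a ha2).1]
      exact (hsig a ha2).2
    · rw [hfM a ha ha2, hfW b hb]
      constructor
      · intro h
        have h' : b = sup a := congrArg Subtype.val
          (h : (⟨b, hb⟩ : {v : V // IsWeakSupport T v}) = ⟨sup a, (hsup a ha ha2).1⟩)
        rw [h']
        exact (hsup a ha ha2).2
      · intro h
        show (⟨b, hb⟩ : {v : V // IsWeakSupport T v}) = ⟨sup a, (hsup a ha ha2).1⟩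
        exact Subtype.ext (ws_nbr_unique hT hpk hb (hsup a ha ha2).1 h (hsup a ha ha2).2)
    · rw [hfM a ha ha2, hfL b hb hb2]
      refine iff_of_false (fun h => h) (fun h => ?_)
      refine ha ?_
      rw [hb2.nbr_unique h.symm (hsig b hb2).1]
      exact (hsig b hb2).2
    · rw [hfM a ha ha2, hfM b hb hb2]
      constructor
      · rintro ⟨hR, hmem1, hmem2⟩
        obtain ⟨hneR, -⟩ := (hRadj _ _).mp hR
        have hnev : sup a ≠ sup b := fun hh => hneR (Subtype.ext hh)
        rw [hblk] at hmem1 hmem2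
        obtain ⟨m1, e2, e3⟩ := hmem1
        obtain ⟨m2, f2, f3⟩ := hmem2
        obtain ⟨hm1W, hm1L⟩ :=
          hinnerM a m1 ⟨sup b, (hsup b hb hb2).1⟩ ha ha2 e2 e3
        obtain ⟨hm2W, hm2L⟩ :=
          hinnerM b m2 ⟨sup a, (hsup a ha ha2).1⟩ hb hb2 f2 f3
        have hcfg := config_unique hT hnev ha ha2 hm1W hm1L hm2W hm2L hb hb2
          (hsup a ha ha2).1 (hsup b hb hb2).1
          (hsup a ha ha2).2.symm e2 e3 f3.symm f2.symm (hsup b hb hb2).2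
        rw [hcfg.2] at e2
        exact e2
      · intro h
        refine ⟨?_, ?_, ?_⟩
        · rw [hRadj]
          refine ⟨?_, a, b, (hsup a ha ha2).2.symm, h, (hsup b hb hb2).2⟩
          intro hh
          exact (mm_distinct_ws hT hpk h (hsup a ha ha2).1 (hsup b hb hb2).1
            (hsup a ha ha2).2 (hsup b hb hb2).2) (congrArg Subtype.val hh)
        · rw [hblk]; exact ⟨b, h, (hsup b hb hb2).2⟩
        · rw [hblk]; exact ⟨a, h.symm, (hsup a ha ha2).2⟩
  -- conclude
  refine ⟨{v : V // IsWeakSupport T v}, inferInstance, inferInstance, R,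
    Classical.decRel _, P, ⟨hconnR, hacyc⟩, hcard2, ?_, ?_⟩
  · intro v
    refine ⟨hpart1 v, ?_, hpart3 v⟩
    intro x
    rw [SimpleGraph.mem_neighborFinset]
    exact hcov v x
  · exact ⟨⟨Equiv.ofBijective f ⟨hinj, hsurj⟩, fun {a b} => hadj_iff a b⟩⟩

end ForwardMain

section Backward

variable {W : Type} [Fintype W] [DecidableEq W] (R : SimpleGraph W) [DecidableRel R.Adj]
  (P : W → Finset (Finset W))

local notation "G'" => twoSubdivision R P

@[simp] lemma adj_inl_pend {u v : W} : (G').Adj (Sum.inl u) (Sum.inr (Sum.inl v)) ↔ u = v :=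
  Iff.rfl
@[simp] lemma adj_pend_inl {u v : W} : (G').Adj (Sum.inr (Sum.inl u)) (Sum.inl v) ↔ u = v :=
  Iff.rfl
@[simp] lemma adj_inl_blk {u : W} {p} : (G').Adj (Sum.inl u) (Sum.inr (Sum.inr p)) ↔ u = p.1 :=
  Iff.rfl
@[simp] lemma adj_blk_inl {u : W} {p} : (G').Adj (Sum.inr (Sum.inr p)) (Sum.inl u) ↔ u = p.1 :=
  Iff.rfl
@[simp] lemma adj_inl_inl {u v : W} : ¬ (G').Adj (Sum.inl u) (Sum.inl v) := fun h => h
@[simp] lemma adj_pend_pend {u v : W} :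
    ¬ (G').Adj (Sum.inr (Sum.inl u)) (Sum.inr (Sum.inl v)) := fun h => h
@[simp] lemma adj_pend_blk {u : W} {p} :
    ¬ (G').Adj (Sum.inr (Sum.inl u)) (Sum.inr (Sum.inr p)) := fun h => h
@[simp] lemma adj_blk_pend {u : W} {p} :
    ¬ (G').Adj (Sum.inr (Sum.inr p)) (Sum.inr (Sum.inl u)) := fun h => h
@[simp] lemma adj_blk_blk {p q} :
    (G').Adj (Sum.inr (Sum.inr p)) (Sum.inr (Sum.inr q)) ↔
      R.Adj p.1 q.1 ∧ q.1 ∈ p.2.1 ∧ p.1 ∈ q.2.1 := Iff.rfl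

variable (hpart : ∀ v : W, IsFinsetPartitionOf (P v) (R.neighborFinset v))
  (hconn : R.Connected) (hcard : 2 ≤ Fintype.card W)

include hconn hcard in
lemma exists_nbr (v : W) : ∃ w, R.Adj v w := by
  obtain ⟨u, hu⟩ := Fintype.exists_ne_of_one_lt_card (by omega) v
  obtain ⟨p⟩ := hconn v u
  cases p with
  | nil => exact absurd rfl hu.symm
  | cons h q => exact ⟨_, h⟩

include hpart in
lemma exists_block {v w : W} (h : R.Adj v w) : ∃ A, ∃ hA : A ∈ P v, w ∈ A := by
  obtain ⟨-, hcov, -⟩ := hpart v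
  obtain ⟨A, hA, hwA⟩ := (hcov w).mp (by simpa using h)
  exact ⟨A, hA, hwA⟩

include hpart hconn hcard in
lemma pend_leaf (v : W) : IsLeaf (G') (Sum.inr (Sum.inl v) : TwoSubVert W P) := by
  refine ⟨Sum.inl v, rfl, ?_⟩
  rintro (u | u | p) h
  · exact congrArg Sum.inl ((adj_pend_inl R P).mp h).symm
  · exact absurd h (adj_pend_pend R P)
  · exact absurd h (adj_pend_blk R P)

include hpart hconn hcard in
lemma inl_not_leaf (v : W) : ¬ IsLeaf (G') (Sum.inl v : TwoSubVert W P) := by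
  rintro ⟨u, hu, huniq⟩
  obtain ⟨w, hw⟩ := exists_nbr R hconn hcard v
  obtain ⟨A, hA, hwA⟩ := exists_block R P hpart hw
  have h1 : (G').Adj (Sum.inl v) (Sum.inr (Sum.inl v)) := rfl
  have h2 : (G').Adj (Sum.inl v) (Sum.inr (Sum.inr ⟨v, A, hA⟩)) := rfl
  have := (huniq _ h1).trans (huniq _ h2).symm
  simp at this

include hpart hconn hcard in
lemma blk_not_leaf (p : Σ v : W, {A : Finset W // A ∈ P v}) :
    ¬ IsLeaf (G') (Sum.inr (Sum.inr p) : TwoSubVert W P) := by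
  rintro ⟨u, hu, huniq⟩
  obtain ⟨w, hwA⟩ := (hpart p.1).1 p.2.1 p.2.2
  have hadjw : R.Adj p.1 w := by
    have : w ∈ R.neighborFinset p.1 := ((hpart p.1).2.1 w).mpr ⟨p.2.1, p.2.2, hwA⟩
    simpa using this
  obtain ⟨B, hB, hvB⟩ := exists_block R P hpart hadjw.symm
  have h1 : (G').Adj (Sum.inr (Sum.inr p)) (Sum.inl p.1) := rfl
  have h2 : (G').Adj (Sum.inr (Sum.inr p)) (Sum.inr (Sum.inr ⟨w, B, hB⟩)) :=
    ⟨hadjw, hwA, hvB⟩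
  have := (huniq _ h1).trans (huniq _ h2).symm
  simp at this

include hpart hconn hcard in
lemma ws_iff (x : TwoSubVert W P) :
    IsWeakSupport (G') x ↔ ∃ v, x = Sum.inl v := by
  constructor
  · rintro ⟨u, ⟨hadj, hleaf⟩, -⟩
    -- the only leaves are pendant vertices
    obtain (u | u | p) := u
    · exact absurd hleaf (by
        intro hl
        exact inl_not_leaf R P hpart hconn hcard u hl)
    · -- x adjacent to pendant u, so x = inl u
      obtain (y | y | q) := x
      · exact ⟨y, rfl⟩
      · exact absurd hadj (adj_pend_pend R P)
      · exact absurd hadj (fun h => h)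
    · exact absurd hleaf (blk_not_leaf R P hpart hconn hcard p)
  · rintro ⟨v, rfl⟩
    refine ⟨Sum.inr (Sum.inl v), ⟨rfl, pend_leaf R P hpart hconn hcard v⟩, ?_⟩
    rintro (y | y | q) ⟨hadj, hleaf⟩
    · exact absurd hadj (adj_inl_inl R P)
    · exact (congrArg (Sum.inr ∘ Sum.inl) ((adj_inl_pend R P).mp hadj)).symm
    · exact absurd hleaf (blk_not_leaf R P hpart hconn hcard q)

/-- the fiber map -/
def fib {W : Type} {P : W → Finset (Finset W)} : TwoSubVert W P → W
  | Sum.inl v => v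
  | Sum.inr (Sum.inl v) => v
  | Sum.inr (Sum.inr p) => p.1

lemma fib_eq_or_adj (x : TwoSubVert W P) :
    x = Sum.inl (fib x) ∨ (G').Adj x (Sum.inl (fib x)) := by
  obtain (v | v | p) := x
  · exact Or.inl rfl
  · exact Or.inr rfl
  · exact Or.inr rfl

include hconn hcard in
lemma packing_le_card {S : Set (TwoSubVert W P)} (hS : Is2Packing (G') S) :
    S.ncard ≤ Fintype.card W := by
  have hinj : Set.InjOn (fib (P := P)) S := by
    intro x hx y hy hxy
    by_contra hne
    have h3 := hS x hx y hy hne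
    have hle : (G').dist x y ≤ 2 := by
      obtain hx' | hx' := fib_eq_or_adj R P x <;> obtain hy' | hy' := fib_eq_or_adj R P y
      · exact absurd (hx'.trans (by rw [hxy] at *; exact hy'.symm)) hne
      · rw [hx', hxy]
        exact le_trans (dist_le_one_of_adj hy'.symm) (by omega)
      · rw [hy', ← hxy]
        exact le_trans (dist_le_one_of_adj hx') (by omega)
      · rw [hxy] at hx'
        exact dist_le_two_of_common hx' hy'.symm
    omega
  calc S.ncard = (fib '' S).ncard := (Set.ncard_image_of_injOn hinj).symm
  _ ≤ (Set.univ : Set W).ncard := Set.ncard_le_ncard (Set.subset_univ _) (Set.finite_univ)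
  _ = Fintype.card W := by rw [Set.ncard_univ, Nat.card_eq_fintype_card]

include hpart hconn hcard in
lemma ws_ncard : {x : TwoSubVert W P | IsWeakSupport (G') x}.ncard = Fintype.card W := by
  have : {x : TwoSubVert W P | IsWeakSupport (G') x} = Set.range Sum.inl := by
    ext x
    rw [Set.mem_setOf_eq, ws_iff R P hpart hconn hcard]
    simp [eq_comm, Set.mem_range]
  rw [this, ← Set.image_univ, Set.ncard_image_of_injective _ Sum.inl_injective,
    Set.ncard_univ, Nat.card_eq_fintype_card]

include hpart hconn hcard in
lemma ws_packing (hGc : (G').Connected) :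
    Is2Packing (G') {x : TwoSubVert W P | IsWeakSupport (G') x} := by
  intro x hx y hy hne
  obtain ⟨u, rfl⟩ := (ws_iff R P hpart hconn hcard x).mp hx
  obtain ⟨v, rfl⟩ := (ws_iff R P hpart hconn hcard y).mp hy
  have huv : u ≠ v := fun h => hne (by rw [h])
  refine three_le_dist ?_ hne (adj_inl_inl R P) ?_
  · exact hGc _ _
  · rintro (z | z | q) ⟨h1, h2⟩
    · exact adj_inl_inl R P h1
    · exact huv ((adj_inl_pend R P |>.mp h1).trans (adj_pend_inl R P |>.mp h2))
    · exact huv ((adj_inl_blk R P |>.mp h1).trans (adj_blk_inl R P |>.mp h2).symm)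

end Backward

lemma iso_connected {V W : Type*} {G : SimpleGraph V} {G' : SimpleGraph W}
    (e : G ≃g G') (h : G.Connected) : G'.Connected := by
  rw [SimpleGraph.connected_iff] at h ⊢
  refine ⟨fun x y => ?_, ⟨e h.2.some⟩⟩
  obtain ⟨p⟩ := h.1 (e.symm x) (e.symm y)
  exact ⟨(SimpleGraph.Walk.map e.toHom p).copy (by simp) (by simp)⟩

lemma iso_dist_le' {V W : Type*} {G : SimpleGraph V} {G' : SimpleGraph W}
    (e : G ≃g G') (u v : V) : G'.dist (e u) (e v) ≤ G.dist u v := by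
  by_cases hr : G.Reachable u v
  · obtain ⟨p, hp⟩ := hr.exists_walk_length_eq_dist
    calc G'.dist (e u) (e v) ≤ (p.map e.toHom).length := SimpleGraph.dist_le _
    _ = G.dist u v := by rw [Walk.length_map, hp]
  · have hr' : ¬ G'.Reachable (e u) (e v) := by
      intro ⟨q⟩
      refine hr ?_
      have h2 := Walk.map e.symm.toHom q
      constructor
      convert h2 using 2 <;> simp
    rw [SimpleGraph.dist_eq_zero_of_not_reachable hr,
      SimpleGraph.dist_eq_zero_of_not_reachable hr']

lemma iso_dist {V W : Type*} {G : SimpleGraph V} {G' : SimpleGraph W}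
    (e : G ≃g G') (u v : V) : G'.dist (e u) (e v) = G.dist u v := by
  refine le_antisymm (iso_dist_le' e u v) ?_
  have h := iso_dist_le' e.symm (e u) (e v)
  simpa using h

lemma iso_leaf {V W : Type*} {G : SimpleGraph V} {G' : SimpleGraph W}
    (e : G ≃g G') (v : V) : IsLeaf G' (e v) ↔ IsLeaf G v := by
  constructor
  · rintro ⟨u, hu, huniq⟩
    refine ⟨e.symm u, ?_, ?_⟩
    · have h : G'.Adj (e v) (e (e.symm u)) := by simpa using hu
      exact e.map_adj_iff.mp h
    · intro y hy
      have h := huniq (e y) (e.map_adj_iff.mpr hy)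
      have := congrArg e.symm h
      simpa using this
  · rintro ⟨u, hu, huniq⟩
    refine ⟨e u, e.map_adj_iff.mpr hu, ?_⟩
    intro y hy
    have hy' : G.Adj v (e.symm y) := by
      have h : G'.Adj (e v) (e (e.symm y)) := by simpa using hy
      exact e.map_adj_iff.mp h
    have h := huniq _ hy'
    have := congrArg e h
    simpa using this

lemma iso_weakSupport {V W : Type*} {G : SimpleGraph V} {G' : SimpleGraph W}
    (e : G ≃g G') (v : V) : IsWeakSupport G' (e v) ↔ IsWeakSupport G v := by
  constructor
  · rintro ⟨u, ⟨hu, hul⟩, huniq⟩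
    refine ⟨e.symm u, ⟨?_, ?_⟩, ?_⟩
    · have h : G'.Adj (e v) (e (e.symm u)) := by simpa using hu
      exact e.map_adj_iff.mp h
    · have h : IsLeaf G' (e (e.symm u)) := by simpa using hul
      exact (iso_leaf e _).mp h
    · intro y ⟨hy, hyl⟩
      have h := huniq (e y) ⟨e.map_adj_iff.mpr hy, (iso_leaf e _).mpr hyl⟩
      have := congrArg e.symm h
      simpa using this
  · rintro ⟨u, ⟨hu, hul⟩, huniq⟩
    refine ⟨e u, ⟨e.map_adj_iff.mpr hu, (iso_leaf e _).mpr hul⟩, ?_⟩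
    intro y ⟨hy, hyl⟩
    have hy' : G.Adj v (e.symm y) := by
      have h : G'.Adj (e v) (e (e.symm y)) := by simpa using hy
      exact e.map_adj_iff.mp h
    have hyl' : IsLeaf G (e.symm y) := by
      have h : IsLeaf G' (e (e.symm y)) := by simpa using hyl
      exact (iso_leaf e _).mp h
    have h := huniq _ ⟨hy', hyl'⟩
    have := congrArg e h
    simpa using this

lemma backward_main {V : Type} [Fintype V] (T : SimpleGraph V) (hT : T.IsTree)
    {W : Type} [Fintype W] [DecidableEq W] (R : SimpleGraph W) [DecidableRel R.Adj]
    (P : W → Finset (Finset W)) (hRt : R.IsTree) (hcard : 2 ≤ Fintype.card W)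
    (hpart : ∀ v : W, IsFinsetPartitionOf (P v) (R.neighborFinset v))
    (e : T ≃g twoSubdivision R P) :
    Is2Packing T {v | IsWeakSupport T v} ∧
      ∀ S : Set V, Is2Packing T S → S.ncard ≤ {v | IsWeakSupport T v}.ncard := by
  have hRc : R.Connected := hRt.isConnected
  have hGc : (twoSubdivision R P).Connected := iso_connected e hT.isConnected
  have hwsset : {x : TwoSubVert W P | IsWeakSupport (twoSubdivision R P) x} =
      e '' {v | IsWeakSupport T v} := by
    ext x
    constructor
    · intro hx
      refine ⟨e.symm x, ?_, by simp⟩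
      have h : IsWeakSupport (twoSubdivision R P) (e (e.symm x)) := by simpa using hx
      exact (iso_weakSupport e _).mp h
    · rintro ⟨v, hv, rfl⟩
      exact (iso_weakSupport e _).mpr hv
  have hwsncard : {v | IsWeakSupport T v}.ncard = Fintype.card W := by
    rw [← ws_ncard R P hpart hRc hcard, hwsset,
      Set.ncard_image_of_injective _ e.injective]
  constructor
  · intro u hu v hv hne
    rw [← iso_dist e]
    exact ws_packing R P hpart hRc hcard hGc (e u) ((iso_weakSupport e u).mpr hu)
      (e v) ((iso_weakSupport e v).mpr hv) (fun h => hne (e.injective h))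
  · intro S hS
    have hS' : Is2Packing (twoSubdivision R P) (e '' S) := by
      rintro x ⟨a, ha, rfl⟩ y ⟨b, hb, rfl⟩ hne
      rw [iso_dist e]
      exact hS a ha b hb (fun h => hne (by rw [h]))
    calc S.ncard = (e '' S).ncard := (Set.ncard_image_of_injective _ e.injective).symm
    _ ≤ Fintype.card W := packing_le_card R P hRc hcard hS'
    _ = {v | IsWeakSupport T v}.ncard := hwsncard.symm


/-- For a tree `T` of order at least `6`, the set of weak support vertices
of `T` is a maximum 2-packing iff `T` is isomorphic to a 2-subdivision `R(P)` of some
tree `R` of order at least `2`. -/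
theorem weak_supports_max_packing_iff_twoSubdivision {V : Type} [Fintype V]
    (T : SimpleGraph V) (hT : T.IsTree) (h6 : 6 ≤ Fintype.card V) :
    (Is2Packing T {v | IsWeakSupport T v} ∧
      ∀ S : Set V, Is2Packing T S → S.ncard ≤ {v | IsWeakSupport T v}.ncard) ↔
    ∃ (W : Type) (_ : Fintype W) (_ : DecidableEq W) (R : SimpleGraph W)
      (_ : DecidableRel R.Adj) (P : W → Finset (Finset W)),
        R.IsTree ∧ 2 ≤ Fintype.card W ∧
        (∀ v : W, IsFinsetPartitionOf (P v) (R.neighborFinset v)) ∧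
        Nonempty (T ≃g twoSubdivision R P) := by
  constructor
  · intro h
    exact forward_main hT h6 h.1 h.2
  · rintro ⟨W, fW, dW, R, dR, P, hRt, hcard, hpart, ⟨e⟩⟩
    exact backward_main T hT R P hRt hcard hpart e
end

section
/- Let T be a tree of order at least 6 such that the vertices of T can be labeled A or B with the properties: (i) every vertex of T has exactly one neighbor labeled B, and (ii) every leaf and every support vertex of T is labeled B. Then the set F of all edges whose both endpoints are labeled B contains every pendant edge of T, and every edge of F is at edge-distance exactly 3 from every other edge of F closest to it, i.e., d_T(e, F \ {e}) = 3 for every e ∈ F. -/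
open SimpleGraph

variable {V : Type*}

private lemma dist_ge_three {V : Type*} {T : SimpleGraph V} (hc : T.Connected)
    {u v : V} (h0 : u ≠ v) (h1 : ¬ T.Adj u v)
    (h2 : ∀ m, T.Adj u m → ¬ T.Adj m v) : 3 ≤ T.dist u v := by
  by_contra h
  push_neg at h
  obtain ⟨p, hp⟩ := (hc u v).exists_walk_length_eq_dist
  rw [← hp] at h
  cases p with
  | nil => exact h0 rfl
  | cons hadj q =>
    cases q with
    | nil => exact h1 hadj
    | cons hadj2 r =>
      cases r with
      | nil => exact h2 _ hadj hadj2
      | cons hadj3 r' =>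
        simp only [SimpleGraph.Walk.length_cons] at h
        omega

private lemma reach_stay {V : Type*} {T : SimpleGraph V} {a b : V}
    (h1 : ∀ x, T.Adj a x → x = b) (h2 : ∀ x, T.Adj b x → x = a) :
    ∀ (u v : V) (w : T.Walk u v), (u = a ∨ u = b) → (v = a ∨ v = b) := by
  intro u v w
  induction w with
  | nil => exact id
  | cons h p ih =>
    intro hu
    apply ih
    rcases hu with rfl | rfl
    · exact Or.inr (h1 _ h)
    · exact Or.inl (h2 _ h)

private lemma aux_main {V : Type*} [Fintype V]
    (T : SimpleGraph V) (hT : T.IsTree) (label : V → Bool)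
    (hi : ∀ v : V, ∃! u : V, T.Adj v u ∧ label u = true)
    (hii : ∀ v : V, (IsLeaf T v ∨ IsSupport T v) → label v = true)
    (a b x : V) (hab : T.Adj a b) (hla : label a = true) (hlb : label b = true)
    (hbx : T.Adj b x) (hxa : x ≠ a) :
    edistToSet T s(a, b) ({e' ∈ T.edgeSet | ∀ t ∈ e', label t = true} \ {s(a, b)}) = 3 := by
  classical
  have huniq : ∀ v u u' : V, T.Adj v u → label u = true → T.Adj v u' → label u' = true →
      u = u' := by
    intro v u u' p1 p2 p3 p4
    obtain ⟨w, -, hw⟩ := hi v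
    rw [hw u ⟨p1, p2⟩, hw u' ⟨p3, p4⟩]
  have hba : ∀ u, T.Adj a u → label u = true → u = b :=
    fun u p1 p2 => huniq a u b p1 p2 hab hlb
  have hbb : ∀ u, T.Adj b u → label u = true → u = a :=
    fun u p1 p2 => huniq b u a p1 p2 hab.symm hla
  -- x is labeled A (false)
  have hlx : label x = false := by
    by_contra hx
    rw [Bool.not_eq_false] at hx
    exact hxa (hbb x hbx hx)
  -- x is not a leaf, so it has a neighbor y ≠ b
  have hxnl : ¬ IsLeaf T x := by
    intro hleaf
    have := hii x (Or.inl hleaf)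
    rw [hlx] at this
    exact Bool.false_ne_true this
  obtain ⟨y, hxy, hyb⟩ : ∃ y, T.Adj x y ∧ y ≠ b := by
    by_contra hno
    push_neg at hno
    exact hxnl ⟨b, hbx.symm, fun u hu => hno u hu⟩
  have hly : label y = false := by
    by_contra hy
    rw [Bool.not_eq_false] at hy
    exact hyb (huniq x y b hxy hy hbx.symm hlb)
  have hya : y ≠ a := by
    intro h; rw [h, hla] at hly; exact Bool.noConfusion hly
  -- y's unique B-neighbor z
  obtain ⟨z, ⟨hyz, hlz⟩, -⟩ := hi y
  have hPU := hT.existsUnique_path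
  have hxb : x ≠ b := hbx.ne'
  have hxa' : x ≠ a := hxa
  have hyx : y ≠ x := hxy.ne'
  -- z ≠ b (else triangle y-x-b), z ≠ a (else 4-cycle y-x-b-a)
  have hnyb : ¬ T.Adj y b := by
    intro h
    obtain ⟨p0, -, hu⟩ := hPU y b
    have e1 := hu (SimpleGraph.Walk.cons h SimpleGraph.Walk.nil)
      (by simp [SimpleGraph.Walk.isPath_def, hyb])
    have e2 := hu (SimpleGraph.Walk.cons hxy.symm
        (SimpleGraph.Walk.cons hbx.symm SimpleGraph.Walk.nil))
      (by simp [SimpleGraph.Walk.isPath_def, hyx, hyb, hxb])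
    have := congrArg SimpleGraph.Walk.length (e1.trans e2.symm)
    simp at this
  have hnya : ¬ T.Adj y a := by
    intro h
    obtain ⟨p0, -, hu⟩ := hPU y a
    have e1 := hu (SimpleGraph.Walk.cons h SimpleGraph.Walk.nil)
      (by simp [SimpleGraph.Walk.isPath_def, hya])
    have e2 := hu (SimpleGraph.Walk.cons hxy.symm (SimpleGraph.Walk.cons hbx.symm
        (SimpleGraph.Walk.cons hab.symm SimpleGraph.Walk.nil)))
      (by simp [SimpleGraph.Walk.isPath_def, hyx, hyb, hya, hxb, hxa, hab.ne'])
    have := congrArg SimpleGraph.Walk.length (e1.trans e2.symm)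
    simp at this
  have hzb : z ≠ b := fun h => hnyb (h ▸ hyz)
  have hza : z ≠ a := fun h => hnya (h ▸ hyz)
  -- z's unique B-neighbor w
  obtain ⟨w, ⟨hzw, hlw⟩, -⟩ := hi z
  have hwa : w ≠ a := by
    rintro rfl
    exact hzb (hba z hzw.symm hlz)
  have hwb : w ≠ b := by
    rintro rfl
    exact hza (hbb z hzw.symm hlz)
  -- the key lower bound: any B-B edge other than s(a,b) is at distance ≥ 3
  have key : ∀ c d : V, T.Adj c d → label c = true → label d = true →
      s(c, d) ≠ s(a, b) → ∀ u ∈ s(a, b), ∀ v ∈ s(c, d), 3 ≤ T.dist u v := by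
    intro c d hcd hlc hld hne u hu v hv
    have hca : c ≠ a := by
      rintro rfl
      exact hne (by rw [hba d hcd hld])
    have hcb : c ≠ b := by
      rintro rfl
      rw [hbb d hcd hld] at hne
      exact hne Sym2.eq_swap
    have hda : d ≠ a := by
      rintro rfl
      rw [hba c hcd.symm hlc] at hne
      exact hne Sym2.eq_swap
    have hdb : d ≠ b := by
      rintro rfl
      exact hne (by rw [hbb c hcd.symm hlc])
    rw [Sym2.mem_iff] at hu hv
    have hlu : label u = true := by rcases hu with rfl | rfl <;> assumption
    have hlv : label v = true := by rcases hv with rfl | rfl <;> assumption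
    have huv : u ≠ v := by
      rcases hu with rfl | rfl <;> rcases hv with rfl | rfl <;>
        first
          | exact hca.symm
          | exact hcb.symm
          | exact hda.symm
          | exact hdb.symm
    refine dist_ge_three hT.isConnected huv ?_ ?_
    · intro hadj
      rcases hu with rfl | rfl
      · have := hba v hadj hlv
        rcases hv with rfl | rfl
        · exact hcb this
        · exact hdb this
      · have := hbb v hadj hlv
        rcases hv with rfl | rfl
        · exact hca this
        · exact hda this
    · intro m hm1 hm2
      exact huv (huniq m u v hm1.symm hlu hm2 hlv)
  -- lower bound on edgeDist for every member of F \ {s(a,b)}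
  have hlow : ∀ f' ∈ ({e' ∈ T.edgeSet | ∀ t ∈ e', label t = true} \ {s(a, b)} : Set (Sym2 V)),
      3 ≤ edgeDist T s(a, b) f' := by
    intro f' hf'
    induction f' using Sym2.ind with
    | _ c d =>
      obtain ⟨⟨hE, hL⟩, hne⟩ := hf'
      have hcd : T.Adj c d := hE
      have hne' : s(c, d) ≠ s(a, b) := hne
      have hS : {n | ∃ u ∈ s(a, b), ∃ v ∈ s(c, d), T.dist u v = n}.Nonempty :=
        ⟨T.dist a c, a, by simp, c, by simp, rfl⟩
      obtain ⟨u, hu, v, hv, hd⟩ := Nat.sInf_mem hS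
      show 3 ≤ sInf {n | ∃ u ∈ s(a, b), ∃ v ∈ s(c, d), T.dist u v = n}
      rw [← hd]
      exact key c d hcd (hL c (Sym2.mem_mk_left c d)) (hL d (Sym2.mem_mk_right c d)) hne' u hu v hv
  -- the edge s(z,w) witnesses the upper bound
  have hfmem : s(z, w) ∈ ({e' ∈ T.edgeSet | ∀ t ∈ e', label t = true}
      \ {s(a, b)} : Set (Sym2 V)) := by
    refine ⟨⟨hzw, ?_⟩, ?_⟩
    · intro t ht
      rw [Sym2.mem_iff] at ht
      rcases ht with rfl | rfl <;> assumption
    · intro h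
      rw [Set.mem_singleton_iff, Sym2.eq_iff] at h
      rcases h with ⟨rfl, -⟩ | ⟨rfl, -⟩
      · exact hza rfl
      · exact hzb rfl
  have hdbz : T.dist b z = 3 := by
    have hle : T.dist b z ≤ 3 := by
      have := SimpleGraph.dist_le (SimpleGraph.Walk.cons hbx (SimpleGraph.Walk.cons hxy
          (SimpleGraph.Walk.cons hyz SimpleGraph.Walk.nil)))
      simpa using this
    have hge : 3 ≤ T.dist b z := by
      refine key z w hzw hlz hlw ?_ b (by simp) z (by simp)
      intro h
      rw [Sym2.eq_iff] at h
      rcases h with ⟨rfl, -⟩ | ⟨rfl, -⟩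
      · exact hza rfl
      · exact hzb rfl
    omega
  have hed : edgeDist T s(a, b) s(z, w) = 3 := by
    have hle : edgeDist T s(a, b) s(z, w) ≤ 3 :=
      Nat.sInf_le ⟨b, by simp, z, by simp, hdbz⟩
    have hge := hlow _ hfmem
    omega
  -- conclude
  have h3mem : (3 : ℕ) ∈ {n | ∃ f ∈ ({e' ∈ T.edgeSet | ∀ t ∈ e', label t = true}
      \ {s(a, b)} : Set (Sym2 V)), edgeDist T s(a, b) f = n} := ⟨s(z, w), hfmem, hed⟩
  have hle : edistToSet T s(a, b) ({e' ∈ T.edgeSet | ∀ t ∈ e', label t = true}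
      \ {s(a, b)}) ≤ 3 := Nat.sInf_le h3mem
  have hge : 3 ≤ edistToSet T s(a, b) ({e' ∈ T.edgeSet | ∀ t ∈ e', label t = true}
      \ {s(a, b)}) := by
    obtain ⟨f', hf', heq⟩ := Nat.sInf_mem ⟨3, h3mem⟩
    show 3 ≤ sInf {n | ∃ f ∈ ({e' ∈ T.edgeSet | ∀ t ∈ e', label t = true}
      \ {s(a, b)} : Set (Sym2 V)), edgeDist T s(a, b) f = n}
    rw [← heq]
    exact hlow f' hf'
  omega

/-- If the vertices of a tree `T` of order at least `6` are labeled `A`/`B`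
(`B` = `true`) so that every vertex has exactly one neighbor labeled `B` and every leaf
and support vertex is labeled `B`, then the set `F` of B–B edges contains every pendant
edge and every edge of `F` is at edge-distance exactly `3` from `F \ {e}`. -/
theorem BB_edges_property {V : Type*} [Fintype V]
    (T : SimpleGraph V) (hT : T.IsTree) (h6 : 6 ≤ Fintype.card V)
    (label : V → Bool)
    (hi : ∀ v : V, ∃! u : V, T.Adj v u ∧ label u = true)
    (hii : ∀ v : V, (IsLeaf T v ∨ IsSupport T v) → label v = true) :
    (∀ e, IsPendantEdge T e →
        e ∈ {e ∈ T.edgeSet | ∀ x ∈ e, label x = true}) ∧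
    ∀ e ∈ {e ∈ T.edgeSet | ∀ x ∈ e, label x = true},
      edistToSet T e ({e' ∈ T.edgeSet | ∀ x ∈ e', label x = true} \ {e}) = 3 := by
  classical
  constructor
  · rintro e ⟨u, v, rfl, hadj, hleaf⟩
    have hu : label u = true := hii u (Or.inl hleaf)
    have hv : label v = true := hii v (Or.inr ⟨u, hadj.symm, hleaf⟩)
    refine ⟨T.mem_edgeSet.mpr hadj, ?_⟩
    intro t ht
    rw [Sym2.mem_iff] at ht
    rcases ht with rfl | rfl <;> assumption
  · intro e he
    induction e using Sym2.ind with
    | _ a b =>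
      obtain ⟨heE, heL⟩ := he
      have hab : T.Adj a b := heE
      have hla : label a = true := heL a (Sym2.mem_mk_left a b)
      have hlb : label b = true := heL b (Sym2.mem_mk_right a b)
      -- there is a third vertex adjacent to a or b
      obtain ⟨x, hx⟩ : ∃ x, (T.Adj b x ∧ x ≠ a) ∨ (T.Adj a x ∧ x ≠ b) := by
        by_contra hno
        push_neg at hno
        have h1 : ∀ x, T.Adj a x → x = b := fun x h => (hno x).2 h
        have h2 : ∀ x, T.Adj b x → x = a := fun x h => (hno x).1 h
        have hall : ∀ v, v = a ∨ v = b := fun v =>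
          reach_stay h1 h2 a v (hT.isConnected.preconnected a v).some (Or.inl rfl)
        have hsub : (Finset.univ : Finset V) ⊆ {a, b} := by
          intro v _
          rcases hall v with rfl | rfl <;> simp
        have hcard : Fintype.card V ≤ 2 := by
          calc Fintype.card V = (Finset.univ : Finset V).card := (Finset.card_univ).symm
            _ ≤ ({a, b} : Finset V).card := Finset.card_le_card hsub
            _ ≤ 2 := (Finset.card_insert_le a {b}).trans (by simp)
        omega
      rcases hx with ⟨hbx, hxa⟩ | ⟨hax, hxb⟩
      · exact aux_main T hT label hi hii a b x hab hla hlb hbx hxa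
      · rw [show s(a, b) = s(b, a) from Sym2.eq_swap]
        exact aux_main T hT label hi hii b a x hab.symm hlb hla hax hxb
end
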